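/- arXiv:1407.7826 — 5 statements merged into one kernel-verified Lean document; each statement's English description precedes it below -/
import Mathlib

section
/- For any semistandard Young tableau T, the scanning tableau S(T) is a key: every entry appearing in column j of S(T) also appears in column j-1, for each j ≥ 2. -/
namespace Demazure

/-- A tableau given as its list of columns (left to right); each column lists its
entries from top to bottom. -/
abbrev Cols := List (List ℕ)

/-- The shape of a tableau: the list of its column lengths. -/
def shape (T : Cols) : List ℕ := T.map List.length

/-- Semistandard: column lengths weakly decreasing, entries strictly increasing
down each column, and entries weakly increasing along rows. -/
def IsSSYT (T : Cols) : Prop :=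
  (shape T).Chain' (fun a b => b ≤ a) ∧
  (∀ c ∈ T, c.Chain' (· < ·)) ∧
  T.Chain' (fun c c' => ∀ i, i < c'.length → c.getD i 0 ≤ c'.getD i 0)

/-- All entries lie in [n] = {1, ..., n}. -/
def EntriesIn (n : ℕ) (T : Cols) : Prop := ∀ c ∈ T, ∀ x ∈ c, 1 ≤ x ∧ x ≤ n

/-- A key: every entry of a column appears in the previous column. -/
def IsKeyCols (T : Cols) : Prop := T.Chain' (fun c c' => ∀ x ∈ c', x ∈ c)

/-- Entrywise comparison of two tableaux of the same shape. -/
def EntrywiseLE (T U : Cols) : Prop := List.Forall₂ (List.Forall₂ (· ≤ ·)) T U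

/-- Entry at column j, row i (1-indexed); 0 if out of range. -/
def entryAt (T : Cols) (j i : ℕ) : ℕ := (T.getD (j-1) []).getD (i-1) 0

/-- Continuation of the earliest weakly increasing subsequence after value `c`. -/
def ewisFrom (c : ℕ) : List ℕ → List ℕ
  | [] => []
  | x :: xs => if c ≤ x then x :: ewisFrom x xs else ewisFrom c xs

/-- The earliest weakly increasing subsequence (EWIS) of a sequence. -/
def ewis : List ℕ → List ℕ
  | [] => []
  | x :: xs => x :: ewisFrom x xs

/-- One scanning sweep: continue the EWIS of column bottoms with current value `c`,
returning the last value of the EWIS and the columns with the EWIS boxes removed. -/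
def scanAux (c : ℕ) : Cols → ℕ × Cols
  | [] => (c, [])
  | col :: rest =>
    match col.getLast? with
    | some b =>
      if c ≤ b then
        let r := scanAux b rest
        (r.1, col.dropLast :: r.2)
      else
        let r := scanAux c rest
        (r.1, col :: r.2)
    | none =>
      let r := scanAux c rest
      (r.1, col :: r.2)

/-- Produce the first column of the scanning tableau (top to bottom), with fuel. -/
def scanFirstFuel : ℕ → Cols → List ℕ
  | 0, _ => []
  | _, [] => []
  | fuel+1, col :: rest =>
    match col.getLast? with
    | none => []
    | some b =>
      let r := scanAux b rest
      scanFirstFuel fuel (col.dropLast :: r.2) ++ [r.1]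

/-- First column of the scanning tableau. -/
def scanFirst (T : Cols) : List ℕ :=
  scanFirstFuel (T.headD []).length T

/-- The scanning tableau S(T), column by column. -/
def scanTableau : Cols → Cols
  | [] => []
  | col :: rest => scanFirst (col :: rest) :: scanTableau rest

/-- Scanning-path version of `scanAux`: also records the boxes (column, row),
1-indexed, visited by the EWIS; `h` is the (1-indexed) number of the first column
of the remaining list. -/
def scanPathAux (c h : ℕ) : Cols → List (ℕ × ℕ) × Cols
  | [] => ([], [])
  | col :: rest =>
    match col.getLast? with
    | some b =>
      if c ≤ b then
        let r := scanPathAux b (h+1) rest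
        ((h, col.length) :: r.1, col.dropLast :: r.2)
      else
        let r := scanPathAux c (h+1) rest
        (r.1, col :: r.2)
    | none =>
      let r := scanPathAux c (h+1) rest
      (r.1, col :: r.2)

/-- The scanning paths originating in (1-indexed) column `j`, listed from the top
row of the column downwards. -/
def scanColPathsAux (j : ℕ) : ℕ → List ℕ → Cols → List (List (ℕ × ℕ))
  | 0, _, _ => []
  | fuel+1, col, rest =>
    match col.getLast? with
    | none => []
    | some b =>
      let r := scanPathAux b (j+1) rest
      scanColPathsAux j fuel col.dropLast r.2 ++ [(j, col.length) :: r.1]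

/-- The list of scanning paths P(T; j, ·) for the boxes of column j (1-indexed),
element i-1 being the path of the box in row i. -/
def pathsFrom (T : Cols) (j : ℕ) : List (List (ℕ × ℕ)) :=
  scanColPathsAux j (T.getD (j-1) []).length (T.getD (j-1) []) (T.drop j)

/-- The scanning path P(T; j, i) (1-indexed box). -/
def scanPath (T : Cols) (j i : ℕ) : List (ℕ × ℕ) :=
  (pathsFrom T j).getD (i-1) []

/-- The scanning-tableau entry S(T; j, i): the value at the last box of P(T;j,i). -/
def sVal (T : Cols) (j i : ℕ) : ℕ :=
  match (scanPath T j i).getLast? with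
  | some q => entryAt T q.1 q.2
  | none => 0

/-- The row index a(l,k;j): row of the path through (l-1, k); by convention k at j = l. -/
def aIdx (T : Cols) (l k j : ℕ) : ℕ :=
  if j = l then k
  else ((pathsFrom T j).findIdx (fun p => decide ((l-1, k) ∈ p))) + 1

/-- The row index b(l,k;j): row of the path through (l, k+1), with the stated
conventions at k = ζ_l and at j = l. -/
def bIdx (T : Cols) (l k j : ℕ) : ℕ :=
  if j = l then k + 1
  else if k = (T.getD (l-1) []).length then (T.getD (j-1) []).length + 1
  else ((pathsFrom T j).findIdx (fun p => decide ((l, k+1) ∈ p))) + 1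

/-- E(l,k;j,i): the last value of the EWIS defining P(T;j,i) occurring strictly to
the left of column l; by convention k when j = l. -/
def eVal (T : Cols) (l k j i : ℕ) : ℕ :=
  if j = l then k
  else
    match ((scanPath T j i).filter (fun q => decide (q.1 < l))).getLast? with
    | some q => entryAt T q.1 q.2
    | none => 0

/-- The local condition set B(T, Y; l, k) =
⋂_{j=1}^{l} ⋃_{i=a(j)}^{b(j)-1} [E(l,k;j,i), Y(j,i)]. -/
def localB (T Y : Cols) (l k : ℕ) : Set ℕ :=
  {v | ∀ j, 1 ≤ j → j ≤ l →
    ∃ i, aIdx T l k j ≤ i ∧ i + 1 ≤ bIdx T l k j ∧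
      eVal T l k j i ≤ v ∧ v ≤ entryAt Y j i}

/-- A skew tableau, as a list of columns, each with its offset (number of absent
boxes above it) and its list of entries (top to bottom). -/
abbrev SkewCols := List (ℕ × List ℕ)

/-- Entry of an offset column in absolute row r (0-indexed). -/
def colEntry? (p : ℕ × List ℕ) (r : ℕ) : Option ℕ :=
  if p.1 ≤ r then p.2[r - p.1]? else none

/-- Validity of a skew tableau: columns strictly increase, the inner and outer
column lengths are weakly decreasing, and rows weakly increase. -/
def IsSkewTableau (U : SkewCols) : Prop :=
  (∀ p ∈ U, p.2.Chain' (· < ·)) ∧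
  (U.map Prod.fst).Chain' (fun a b => b ≤ a) ∧
  (U.map (fun p => p.1 + p.2.length)).Chain' (fun a b => b ≤ a) ∧
  U.Chain' (fun p q => ∀ r x y, colEntry? p r = some x → colEntry? q r = some y → x ≤ y)

/-- The entries of absolute row r of a skew tableau, left to right. -/
def skewRow (U : SkewCols) (r : ℕ) : List ℕ :=
  U.filterMap (fun p => colEntry? p r)

def maxRow (U : SkewCols) : ℕ := (U.map (fun p => p.1 + p.2.length)).foldr max 0

/-- The row reading word: rows from bottom to top, each read left to right. -/
def rowWord (U : SkewCols) : List ℕ :=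
  ((List.range (maxRow U)).reverse.map (skewRow U)).flatten

/-- Schensted row insertion of x into one row. -/
def rowInsert (x : ℕ) : List ℕ → List ℕ × Option ℕ
  | [] => ([x], none)
  | y :: ys =>
    if y ≤ x then
      let r := rowInsert x ys
      (y :: r.1, r.2)
    else (x :: ys, some y)

/-- Schensted insertion of an entry into a tableau given by its rows. -/
def insertEntry : List (List ℕ) → ℕ → List (List ℕ)
  | [], x => [[x]]
  | row :: rows, x =>
    match rowInsert x row with
    | (r, none) => r :: rows
    | (r, some y) => r :: insertEntry rows y

/-- Insertion tableau (in row form) of a word. -/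
def insertWord (w : List ℕ) : List (List ℕ) :=
  w.foldl insertEntry []

/-- Convert a tableau from row form to column form. -/
def colsOfRows (rows : List (List ℕ)) : Cols :=
  (List.range (rows.headD []).length).map
    (fun j => rows.filterMap (fun r => r[j]?))

/-- Rectification of a skew tableau (jeu de taquin; computed, equivalently, as the
insertion tableau of the row reading word), in column form. -/
def rectify (U : SkewCols) : Cols := colsOfRows (insertWord (rowWord U))

/-- Frank: the column lengths are a rearrangement of those of the rectification. -/
def IsFrank (U : SkewCols) : Prop :=
  (U.map (fun p => p.2.length)).Perm ((rectify U).map List.length)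

/-- K is the right key of T: K has the shape of T and, for each j, the j-th column
of K is the rightmost column of a frank skew tableau rectifying to T whose
rightmost column has the length of the j-th column of T. -/
def IsRightKeyOf (T K : Cols) : Prop :=
  shape K = shape T ∧
  ∀ j < T.length, ∃ U : SkewCols, IsSkewTableau U ∧ IsFrank U ∧
    rectify U = T ∧
    (U.getLastD (0, [])).2.length = (T.getD j []).length ∧
    (U.getLastD (0, [])).2 = K.getD j []

/-- The right key R(T) of a tableau T. -/
noncomputable def rightKey (T : Cols) : Cols :=
  Classical.epsilon (IsRightKeyOf T)

/-- The key of the permutation w of shape given by the column lengths `zeta`: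
its column of length k consists of w(1), ..., w(k) (values in [n]) sorted. -/
def keyOf (n : ℕ) (w : Equiv.Perm (Fin n)) (zeta : List ℕ) : Cols :=
  zeta.map (fun k =>
    List.insertionSort (· ≤ ·)
      ((List.range k).filterMap (fun i =>
        if h : i < n then some (((w ⟨i, h⟩ : Fin n) : ℕ) + 1) else none)))

/-- w is 312-avoiding. -/
def Is312Avoiding {n : ℕ} (w : Equiv.Perm (Fin n)) : Prop :=
  ¬ ∃ a b c : Fin n, a < b ∧ b < c ∧ w b < w c ∧ w c < w a

/-- The set of Demazure tableaux D_λ(w): semistandard tableaux of the given shape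
with entries in [n] whose right key is entrywise dominated by the key of w. -/
def DemazureSet (n : ℕ) (zeta : List ℕ) (w : Equiv.Perm (Fin n)) : Set Cols :=
  {T | IsSSYT T ∧ shape T = zeta ∧ EntriesIn n T ∧
       EntrywiseLE (rightKey T) (keyOf n w zeta)}

/-- Column lengths of the partial staircase λ = (d,...,d,d-1,...,2,1):
ζ = (n, n-1, ..., n+1-d). -/
def staircaseCols (n d : ℕ) : List ℕ := (List.range d).map (fun j => n - j)

/-- S ⊆ ℤ^N is a convex polytope: the set of integral solutions of Ax ≤ b. -/
def IsConvexPolytopeSet (N : ℕ) (S : Set (Fin N → ℤ)) : Prop :=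
  ∃ (m : ℕ) (A : Matrix (Fin m) (Fin N) ℝ) (bb : Fin m → ℝ),
    S = {x | ∀ r, A.mulVec (fun i => (x i : ℝ)) r ≤ bb r}

/-- The point of ℤ^N obtained by reading the entries of a tableau in a fixed order. -/
def toPoint (N : ℕ) (T : Cols) : Fin N → ℤ := fun i => (T.flatten.getD i 0 : ℤ)



/-! ### Auxiliary development for the key property -/

/-- Run successive scans with a given list of seed values. -/
def runSeq : List ℕ → Cols → List ℕ
  | [], _ => []
  | w :: ws, R => (scanAux w R).1 :: runSeq ws (scanAux w R).2

lemma scanAux_nil (c : ℕ) : scanAux c [] = (c, []) := rfl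

lemma scanAux_cons_none {col : List ℕ} (h : col.getLast? = none) (c : ℕ) (rest : Cols) :
    scanAux c (col :: rest) = ((scanAux c rest).1, col :: (scanAux c rest).2) := by
  simp [scanAux, h]

lemma scanAux_cons_le {col : List ℕ} {b : ℕ} (h : col.getLast? = some b) {c : ℕ}
    (hc : c ≤ b) (rest : Cols) :
    scanAux c (col :: rest) = ((scanAux b rest).1, col.dropLast :: (scanAux b rest).2) := by
  simp [scanAux, h, hc]

lemma scanAux_cons_gt {col : List ℕ} {b : ℕ} (h : col.getLast? = some b) {c : ℕ}
    (hc : ¬ c ≤ b) (rest : Cols) :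
    scanAux c (col :: rest) = ((scanAux c rest).1, col :: (scanAux c rest).2) := by
  simp [scanAux, h, hc]

lemma mem_lt_of_concat_chain {l : List ℕ} {b : ℕ} (h : (l ++ [b]).Chain' (· < ·)) :
    ∀ y ∈ l, y < b := by
  have hp : (l ++ [b]).Pairwise (· < ·) := List.isChain_iff_pairwise.mp h
  intro y hy
  exact (List.pairwise_append.mp hp).2.2 y hy b (by simp)

/-- If `col` is strictly increasing with last entry `b`, then the last entry of
`col.dropLast`, if any, is `< b`. -/
lemma dropLast_getLast_lt {col : List ℕ} {b b' : ℕ} (hch : col.Chain' (· < ·))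
    (hl : col.getLast? = some b) (hl' : col.dropLast.getLast? = some b') : b' < b := by
  rcases List.eq_nil_or_concat col with rfl | ⟨L, c, hc⟩
  · simp at hl
  · have hc' : col = L ++ [c] := by simpa using hc
    subst hc'
    rw [List.getLast?_concat] at hl
    rw [List.dropLast_concat] at hl'
    have hb : b = c := by injection hl.symm
    subst hb
    have hb'mem : b' ∈ L := by
      rcases List.eq_nil_or_concat L with rfl | ⟨M, c', hM⟩
      · simp at hl'
      · have hM' : L = M ++ [c'] := by simpa using hM
        subst hM'
        rw [List.getLast?_concat] at hl'
        have : b' = c' := by injection hl'.symm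
        subst this
        simp
    exact mem_lt_of_concat_chain hch b' hb'mem

lemma scanAux_cols_chain : ∀ (R : Cols) (c : ℕ),
    (∀ col ∈ R, col.Chain' (· < ·)) → ∀ col ∈ (scanAux c R).2, col.Chain' (· < ·) := by
  intro R
  induction R with
  | nil => intro c _; simp [scanAux_nil]
  | cons col rest ih =>
    intro c h
    have hcol := h col (by simp)
    have hrest : ∀ col ∈ rest, col.Chain' (· < ·) := fun d hd => h d (by simp [hd])
    cases hl : col.getLast? with
    | none =>
      rw [scanAux_cons_none hl]
      intro d hd
      rcases List.mem_cons.mp hd with rfl | hd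
      · exact hcol
      · exact ih c hrest d hd
    | some b =>
      by_cases hc : c ≤ b
      · rw [scanAux_cons_le hl hc]
        intro d hd
        rcases List.mem_cons.mp hd with rfl | hd
        · exact hcol.prefix (List.dropLast_prefix col)
        · exact ih b hrest d hd
      · rw [scanAux_cons_gt hl hc]
        intro d hd
        rcases List.mem_cons.mp hd with rfl | hd
        · exact hcol
        · exact ih c hrest d hd

/-- One-step simulation lemma: doing an extra scan with a larger value `z` first
commutes with a scan with value `w` up to a residual scan. -/
lemma scan_step : ∀ (R : Cols), (∀ col ∈ R, col.Chain' (· < ·)) → ∀ z w : ℕ, w ≤ z →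
    ∃ z', w ≤ z' ∧
      (((scanAux w R).1 = (scanAux w (scanAux z R).2).1 ∧
        scanAux z' (scanAux w R).2 = ((scanAux z R).1, (scanAux w (scanAux z R).2).2)) ∨
       ((scanAux w R).1 = (scanAux z R).1 ∧
        scanAux z' (scanAux w R).2 = ((scanAux w (scanAux z R).2).1, (scanAux w (scanAux z R).2).2))) := by
  intro R
  induction R with
  | nil =>
    intro _ z w hw
    exact ⟨z, hw, Or.inl ⟨rfl, rfl⟩⟩
  | cons col rest ih =>
    intro h z w hw
    have hcol := h col (by simp)
    have hrest : ∀ col ∈ rest, col.Chain' (· < ·) := fun d hd => h d (by simp [hd])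
    cases hl : col.getLast? with
    | none =>
      obtain ⟨z', hz', hcase⟩ := ih hrest z w hw
      refine ⟨z', hz', ?_⟩
      rw [scanAux_cons_none hl z, scanAux_cons_none hl w]
      rw [scanAux_cons_none hl w ((scanAux z rest).2)]
      rw [scanAux_cons_none hl z' ((scanAux w rest).2)]
      rcases hcase with ⟨h1, h2⟩ | ⟨h1, h2⟩
      · exact Or.inl ⟨h1, by rw [h2]⟩
      · exact Or.inr ⟨h1, by rw [h2]⟩
    | some b =>
      by_cases hzb : z ≤ b
      · -- both z and w enter this column; states coincide afterwards
        have hwb : w ≤ b := le_trans hw hzb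
        refine ⟨w, le_refl w, Or.inr ?_⟩
        rw [scanAux_cons_le hl hzb, scanAux_cons_le hl hwb]
        exact ⟨rfl, rfl⟩
      · by_cases hwb : w ≤ b
        · -- z skips the column, w enters it
          have hbz : b ≤ z := le_of_lt (lt_of_not_ge hzb)
          obtain ⟨z', hz', hcase⟩ := ih hrest z b hbz
          refine ⟨z', le_trans hwb hz', ?_⟩
          rw [scanAux_cons_gt hl hzb, scanAux_cons_le hl hwb]
          rw [scanAux_cons_le hl hwb ((scanAux z rest).2)]
          have hskip : scanAux z' (col.dropLast :: (scanAux b rest).2) =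
              ((scanAux z' (scanAux b rest).2).1,
                col.dropLast :: (scanAux z' (scanAux b rest).2).2) := by
            cases hdl : col.dropLast.getLast? with
            | none => exact scanAux_cons_none hdl z' _
            | some b' =>
              have hb' : b' < b := dropLast_getLast_lt hcol hl hdl
              exact scanAux_cons_gt hdl (by omega) _
          rcases hcase with ⟨h1, h2⟩ | ⟨h1, h2⟩
          · exact Or.inl ⟨h1, by rw [hskip, h2]⟩
          · exact Or.inr ⟨h1, by rw [hskip, h2]⟩
        · -- both skip
          obtain ⟨z', hz', hcase⟩ := ih hrest z w hw
          refine ⟨z', hz', ?_⟩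
          rw [scanAux_cons_gt hl hzb, scanAux_cons_gt hl hwb]
          rw [scanAux_cons_gt hl hwb ((scanAux z rest).2)]
          have hz'b : ¬ z' ≤ b := by
            have : b < w := lt_of_not_ge hwb
            omega
          rw [scanAux_cons_gt hl hz'b ((scanAux w rest).2)]
          rcases hcase with ⟨h1, h2⟩ | ⟨h1, h2⟩
          · exact Or.inl ⟨h1, by rw [h2]⟩
          · exact Or.inr ⟨h1, by rw [h2]⟩

/-- Interference lemma: an extra earlier scan with a larger value loses no outputs. -/
lemma scan_intf : ∀ (ws : List ℕ) (R : Cols) (z : ℕ),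
    (∀ col ∈ R, col.Chain' (· < ·)) → (∀ w ∈ ws, w ≤ z) →
    ws.Pairwise (fun a b => b ≤ a) →
    ∀ x ∈ runSeq ws R, x = (scanAux z R).1 ∨ x ∈ runSeq ws (scanAux z R).2 := by
  intro ws
  induction ws with
  | nil => intro R z _ _ _ x hx; simp [runSeq] at hx
  | cons w ws ih =>
    intro R z hcols hwz hpw x hx
    obtain ⟨z', hz', hcase⟩ := scan_step R hcols z w (hwz w (by simp))
    have hcols1 : ∀ col ∈ (scanAux w R).2, col.Chain' (· < ·) :=
      scanAux_cols_chain R w hcols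
    have hwz' : ∀ w' ∈ ws, w' ≤ z' := fun w' hw' =>
      le_trans ((List.pairwise_cons.mp hpw).1 w' hw') hz'
    have hpw' : ws.Pairwise (fun a b => b ≤ a) := (List.pairwise_cons.mp hpw).2
    rcases List.mem_cons.mp hx with rfl | hx
    · -- x is the first output of the small run
      rcases hcase with ⟨h1, _⟩ | ⟨h1, _⟩
      · right
        rw [h1]
        exact List.mem_cons_self
      · left; exact h1
    · -- x is a later output
      rcases hcase with ⟨_, h2⟩ | ⟨_, h2⟩
      · rcases ih (scanAux w R).2 z' hcols1 hwz' hpw' x hx with h | h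
        · left; rw [h, h2]
        · right
          rw [h2] at h
          exact List.mem_cons_of_mem _ h
      · rcases ih (scanAux w R).2 z' hcols1 hwz' hpw' x hx with h | h
        · right; rw [h, h2]
          exact List.mem_cons_self
        · right
          rw [h2] at h
          exact List.mem_cons_of_mem _ h

/-- Merge lemma: outputs of the scan runs for the second column are among those
for the first column. -/
lemma scan_merge : ∀ (n : ℕ) (c₁ c₂ : List ℕ) (R : Cols), c₁.length ≤ n →
    c₂.Chain' (· < ·) → (∀ col ∈ R, col.Chain' (· < ·)) → c₂.length ≤ c₁.length →
    (∀ i, i < c₂.length → c₁.getD i 0 ≤ c₂.getD i 0) →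
    ∀ x ∈ runSeq c₂.reverse R, x ∈ runSeq c₁.reverse (c₂ :: R) := by
  intro n
  induction n with
  | zero =>
    intro c₁ c₂ R hn _ _ hlen _ x hx
    have : c₂ = [] := List.eq_nil_of_length_eq_zero (by omega)
    subst this
    simp [runSeq] at hx
  | succ n ih =>
    intro c₁ c₂ R hn hc₂ hR hlen hrow x hx
    rcases List.eq_nil_or_concat c₂ with rfl | ⟨i₂, b₂, hc2eq⟩
    · simp [runSeq] at hx
    have hc2eq' : c₂ = i₂ ++ [b₂] := by simpa using hc2eq
    subst hc2eq'
    have hlen2 : i₂.length + 1 ≤ c₁.length := by simpa using hlen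
    rcases List.eq_nil_or_concat c₁ with rfl | ⟨i₁, b₁, hc1eq⟩
    · simp at hlen2
    have hc1eq' : c₁ = i₁ ++ [b₁] := by simpa using hc1eq
    subst hc1eq'
    have hrev1 : (i₁ ++ [b₁]).reverse = b₁ :: i₁.reverse := by simp
    have hrev2 : (i₂ ++ [b₂]).reverse = b₂ :: i₂.reverse := by simp
    have hglast : (i₂ ++ [b₂]).getLast? = some b₂ := List.getLast?_concat
    have hlen12 : i₂.length ≤ i₁.length := by
      have := hlen2; simp at this ⊢; omega
    rw [hrev2] at hx
    rw [hrev1]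
    by_cases hb : b₁ ≤ b₂
    · -- the big scan enters the second column: runs coincide on the first step
      have hscan : scanAux b₁ ((i₂ ++ [b₂]) :: R) =
          ((scanAux b₂ R).1, i₂ :: (scanAux b₂ R).2) := by
        rw [scanAux_cons_le hglast hb, List.dropLast_concat]
      rw [runSeq, hscan]
      rw [runSeq] at hx
      rcases List.mem_cons.mp hx with rfl | hx
      · exact List.mem_cons_self
      · refine List.mem_cons_of_mem _ ?_
        refine ih i₁ i₂ (scanAux b₂ R).2 ?_ ?_ ?_ hlen12 ?_ x hx
        · have : i₁.length + 1 ≤ n + 1 := by simpa using hn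
          omega
        · have hpre : i₂ <+: i₂ ++ [b₂] := ⟨[b₂], rfl⟩
          exact hc₂.prefix hpre
        · exact scanAux_cols_chain R b₂ hR
        · intro i hi
          have hi1 : i < i₁.length := lt_of_lt_of_le hi hlen12
          have e1 : (i₁ ++ [b₁]).getD i 0 = i₁.getD i 0 := List.getD_append _ _ _ _ hi1
          have e2 : (i₂ ++ [b₂]).getD i 0 = i₂.getD i 0 := List.getD_append _ _ _ _ hi
          have := hrow i (by simp; omega)
          rw [e1, e2] at this
          exact this
    · -- the big scan skips the second column
      have hb' : b₂ < b₁ := lt_of_not_ge hb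
      have hlenlt : i₂.length + 1 ≤ i₁.length := by
        by_contra hcon
        have heq : i₁.length = i₂.length := by omega
        have := hrow i₂.length (by simp)
        have e2 : (i₂ ++ [b₂]).getD i₂.length 0 = b₂ := by
          simp [List.getD_append_right]
        have e1 : (i₁ ++ [b₁]).getD i₂.length 0 = b₁ := by
          rw [← heq]
          simp [List.getD_append_right]
        rw [e1, e2] at this
        omega
      have hscan : scanAux b₁ ((i₂ ++ [b₂]) :: R) =
          ((scanAux b₁ R).1, (i₂ ++ [b₂]) :: (scanAux b₁ R).2) :=
        scanAux_cons_gt hglast hb _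
      rw [runSeq, hscan]
      -- apply the interference lemma to the small run
      have hmem : ∀ y ∈ i₂ ++ [b₂], y ≤ b₂ := by
        intro y hy
        rcases List.mem_append.mp hy with hy | hy
        · exact le_of_lt (mem_lt_of_concat_chain hc₂ y hy)
        · simp at hy; omega
      have hwz : ∀ w ∈ (i₂ ++ [b₂]).reverse, w ≤ b₁ := by
        intro w hw
        have := hmem w (List.mem_reverse.mp hw)
        omega
      have hpw : ((i₂ ++ [b₂]).reverse).Pairwise (fun a b => b ≤ a) := by
        rw [List.pairwise_reverse]
        have := List.isChain_iff_pairwise.mp hc₂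
        exact this.imp (fun h => le_of_lt h)
      have hintf := scan_intf ((i₂ ++ [b₂]).reverse) R b₁ hR hwz hpw x (by rw [hrev2]; exact hx)
      rcases hintf with rfl | hx2
      · exact List.mem_cons_self
      · refine List.mem_cons_of_mem _ ?_
        refine ih i₁ (i₂ ++ [b₂]) (scanAux b₁ R).2 ?_ hc₂ (scanAux_cols_chain R b₁ hR) ?_ ?_ x (by rw [hrev2] at hx2 ⊢; exact hx2)
        · have : i₁.length + 1 ≤ n + 1 := by simpa using hn
          omega
        · simpa using hlenlt
        · intro i hi
          have hi1 : i < i₁.length := by simp at hi; omega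
          have e1 : (i₁ ++ [b₁]).getD i 0 = i₁.getD i 0 := List.getD_append _ _ _ _ hi1
          have := hrow i hi
          rw [e1] at this
          exact this

/-- Bridge: `scanFirstFuel` computes the reverse of a seeded scan run. -/
lemma scanFirstFuel_eq_runSeq : ∀ (col : List ℕ) (R : Cols),
    scanFirstFuel col.length (col :: R) = (runSeq col.reverse R).reverse := by
  intro col
  induction col using List.reverseRecOn with
  | nil => intro R; simp [scanFirstFuel, runSeq]
  | append_singleton init b ihh =>
    intro R
    have hlen : (init ++ [b]).length = init.length + 1 := by simp
    rw [hlen]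
    have hglast : (init ++ [b]).getLast? = some b := List.getLast?_concat
    show scanFirstFuel (init.length + 1) ((init ++ [b]) :: R) = _
    rw [scanFirstFuel, hglast]
    simp only [List.dropLast_concat]
    rw [ihh (scanAux b R).2]
    have : (init ++ [b]).reverse = b :: init.reverse := by simp
    rw [this, runSeq]
    simp

lemma scanFirst_cons (col : List ℕ) (R : Cols) :
    scanFirst (col :: R) = (runSeq col.reverse R).reverse := by
  rw [scanFirst]
  exact scanFirstFuel_eq_runSeq col R

lemma IsSSYT.tail {c : List ℕ} {T : Cols} (h : IsSSYT (c :: T)) : IsSSYT T := by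
  obtain ⟨h1, h2, h3⟩ := h
  refine ⟨?_, ?_, h3.tail⟩
  · have : shape (c :: T) = c.length :: shape T := rfl
    rw [this] at h1
    exact h1.tail
  · exact fun col hc => h2 col (by simp [hc])

/-- The key step: every entry of the scan-first column of the tail occurs in the
scan-first column of the whole tableau. -/
lemma scanFirst_subset {c₁ c₂ : List ℕ} {R : Cols} (h : IsSSYT (c₁ :: c₂ :: R)) :
    ∀ x ∈ scanFirst (c₂ :: R), x ∈ scanFirst (c₁ :: c₂ :: R) := by
  obtain ⟨hsh, hcols, hrows⟩ := h
  intro x hx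
  rw [scanFirst_cons] at hx ⊢
  rw [List.mem_reverse] at hx ⊢
  refine scan_merge c₁.length c₁ c₂ R (le_refl _) ?_ ?_ ?_ ?_ x hx
  · exact hcols c₂ (by simp)
  · exact fun col hc => hcols col (by simp [hc])
  · have : shape (c₁ :: c₂ :: R) = c₁.length :: c₂.length :: shape R := rfl
    rw [this] at hsh
    exact (List.isChain_cons_cons.mp hsh).1
  · exact (List.isChain_cons_cons.mp hrows).1

/-- The scanning tableau of a semistandard tableau is a key. -/
theorem scanTableau_isKey (T : Cols) (hT : IsSSYT T) :
    IsKeyCols (scanTableau T) := by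
  induction T with
  | nil => simp [scanTableau, IsKeyCols]; exact List.isChain_nil
  | cons c rest ih =>
    have hrest := ih hT.tail
    rw [scanTableau]
    rw [IsKeyCols, List.Chain', List.isChain_cons]
    refine ⟨?_, hrest⟩
    intro b hb x hx
    cases rest with
    | nil => simp [scanTableau] at hb
    | cons c₂ R =>
      rw [scanTableau, List.head?_cons] at hb
      have hb' : b = scanFirst (c₂ :: R) := by injection hb.symm
      subst hb'
      exact scanFirst_subset hT x hx


end Demazure
end

section
/- For any semistandard Young tableau T, T is entrywise less than or equal to its scanning tableau S(T); that is, T(j,i) ≤ S(T;j,i) for every box (j,i) of the shape of T. -/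
namespace Demazure

lemma scanAux_fst_ge (c : ℕ) (L : Cols) : c ≤ (scanAux c L).1 := by
  induction L generalizing c with
  | nil => simp [scanAux]
  | cons col rest ih =>
    simp only [scanAux]
    rcases h : col.getLast? with _ | b
    · exact ih c
    · by_cases hc : c ≤ b
      · simp only [hc, if_true]
        exact hc.trans (ih b)
      · simp only [hc, if_false]
        exact ih c

lemma le_scanFirstFuel : ∀ (n : ℕ) (col : List ℕ) (rest : Cols),
    col.length = n →
    List.Forall₂ (· ≤ ·) col (scanFirstFuel n (col :: rest)) := by
  intro n
  induction n with
  | zero =>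
    intro col rest h
    rw [List.length_eq_zero_iff] at h
    subst h
    simp [scanFirstFuel]
  | succ n ih =>
    intro col rest h
    have hne : col ≠ [] := by
      intro hc; subst hc; simp at h
    have hlast : col.getLast? = some (col.getLast hne) :=
      List.getLast?_eq_getLast hne
    simp only [scanFirstFuel, hlast]
    have hdl : col.dropLast.length = n := by
      simp [List.length_dropLast, h]
    have h1 := ih col.dropLast ((scanAux (col.getLast hne) rest).2) hdl
    have h2 : col.getLast hne ≤ (scanAux (col.getLast hne) rest).1 :=
      scanAux_fst_ge _ _
    have hcol : col.dropLast ++ [col.getLast hne] = col :=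
      List.dropLast_append_getLast hne
    have h3 := List.rel_append h1 (List.forall₂_cons.mpr ⟨h2, List.Forall₂.nil⟩)
    simpa [hcol] using h3

theorem le_scanTableau' (T : Cols) : EntrywiseLE T (scanTableau T) := by
  induction T with
  | nil => exact List.Forall₂.nil
  | cons col rest ih =>
    simp only [scanTableau]
    refine List.Forall₂.cons ?_ ih
    have : scanFirst (col :: rest) = scanFirstFuel col.length (col :: rest) := by
      simp [scanFirst]
    rw [this]
    exact le_scanFirstFuel col.length col rest rfl

/-- T is entrywise less than or equal to its scanning tableau S(T). -/
theorem le_scanTableau (T : Cols) (hT : IsSSYT T) :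
    EntrywiseLE T (scanTableau T) := le_scanTableau' T

end Demazure
end

section
/- Let λ be a partition, w a permutation, and T a semistandard tableau of shape λ. Then S(T;j,i) ≤ Y(w;j,i) for all boxes (j,i) of λ if and only if T(l,k) ∈ B(T,w;l,k) for all boxes (l,k) of λ. -/
namespace Demazure

/-! ### Auxiliary development for the proof -/

section ScanProof

open List

/-- Value of a box (1-indexed column, row). -/
def entv (T : Cols) (q : ℕ × ℕ) : ℕ := entryAt T q.1 q.2

/-- State invariant: column `m` of the state is a prefix of column `g+m` (0-indexed) of `T`. -/
def PrefSt (T : Cols) (g : ℕ) (R : Cols) : Prop := ∀ m, R.getD m [] <+: T.getD (g + m) []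

/-- Remaining column lengths are weakly decreasing. -/
def DesSt (R : Cols) : Prop := ∀ m, (R.getD (m + 1) []).length ≤ (R.getD m []).length

lemma getD_nil' (m : ℕ) : ([] : Cols).getD m [] = [] := by cases m <;> rfl

lemma getD_drop' (L : Cols) (j m : ℕ) : (L.drop j).getD m [] = L.getD (j + m) [] := by
  simp [List.getD_eq_getElem?_getD, List.getElem?_drop]

lemma pref_getD {A B : List ℕ} (h : A <+: B) {t : ℕ} (ht : t < A.length) (d : ℕ) :
    A.getD t d = B.getD t d := by
  rw [List.getD_eq_getElem?_getD, List.getD_eq_getElem?_getD,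
    List.getElem?_eq_getElem ht, List.getElem?_eq_getElem (lt_of_lt_of_le ht h.length_le),
    h.getElem ht]

lemma getLast?_some {col : List ℕ} {b : ℕ} (h : col.getLast? = some b) :
    col ≠ [] ∧ b = col.getD (col.length - 1) 0 := by
  rcases col.eq_nil_or_concat with rfl | ⟨l, a, rfl⟩
  · simp at h
  · constructor
    · simp
    · rw [List.getLast?_eq_getElem?] at h
      rw [List.getD_eq_getElem?_getD, h]
      rfl

lemma getLast?_of_ne_nil {col : List ℕ} (h : col ≠ []) : ∃ b, col.getLast? = some b := by
  rcases col.eq_nil_or_concat with rfl | ⟨l, a, rfl⟩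
  · exact absurd rfl h
  · exact ⟨a, by simp⟩

lemma prefst_shift {T : Cols} {g : ℕ} {col : List ℕ} {rest : Cols}
    (H : PrefSt T g (col :: rest)) : PrefSt T (g + 1) rest := by
  intro m
  have := H (m + 1)
  simpa [Nat.add_assoc, Nat.add_comm 1 m] using this

lemma desSt_cons {col : List ℕ} {rest : Cols} :
    DesSt (col :: rest) ↔ (rest.getD 0 []).length ≤ col.length ∧ DesSt rest := by
  constructor
  · exact fun H => ⟨H 0, fun m => H (m + 1)⟩
  · rintro ⟨h1, h2⟩ m
    cases m with
    | zero => exact h1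
    | succ m => exact h2 m

lemma desMono {R : Cols} (h : DesSt R) : ∀ m m', m ≤ m' →
    (R.getD m' []).length ≤ (R.getD m []).length := by
  intro m m' hmm
  induction m' with
  | zero => simp_all
  | succ m' ih =>
    rcases Nat.lt_or_ge m (m' + 1) with hlt | hge
    · exact le_trans (h m') (ih (Nat.lt_succ_iff.mp hlt))
    · have : m = m' + 1 := le_antisymm hmm hge
      simp [this]

/-! #### Unfolding lemmas for `scanPathAux` -/

lemma spa_nil (c h : ℕ) : scanPathAux c h [] = ([], []) := rfl

lemma spa_none {col : List ℕ} {c h : ℕ} (rest : Cols) (hL : col.getLast? = none) :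
    scanPathAux c h (col :: rest) =
      ((scanPathAux c (h+1) rest).1, col :: (scanPathAux c (h+1) rest).2) := by
  simp [scanPathAux, hL]

lemma spa_take {col : List ℕ} {c h b : ℕ} (rest : Cols) (hL : col.getLast? = some b)
    (hcb : c ≤ b) :
    scanPathAux c h (col :: rest) =
      ((h, col.length) :: (scanPathAux b (h+1) rest).1,
        col.dropLast :: (scanPathAux b (h+1) rest).2) := by
  simp [scanPathAux, hL, hcb]

lemma spa_skip {col : List ℕ} {c h b : ℕ} (rest : Cols) (hL : col.getLast? = some b)
    (hcb : ¬ c ≤ b) :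
    scanPathAux c h (col :: rest) =
      ((scanPathAux c (h+1) rest).1, col :: (scanPathAux c (h+1) rest).2) := by
  simp [scanPathAux, hL, hcb]

/-! #### Structural lemmas for `scanPathAux` -/

lemma spa_lb : ∀ (R : Cols) (c h : ℕ), ∀ q ∈ (scanPathAux c h R).1, h ≤ q.1 := by
  intro R
  induction R with
  | nil => intro c h q hq; simp [spa_nil] at hq
  | cons col rest ih =>
    intro c h q hq
    cases hL : col.getLast? with
    | none =>
      rw [spa_none rest hL] at hq
      exact le_trans (Nat.le_succ h) (ih c (h+1) q hq)
    | some b =>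
      by_cases hcb : c ≤ b
      · rw [spa_take rest hL hcb] at hq
        rcases List.mem_cons.mp hq with rfl | hq
        · exact le_refl _
        · exact le_trans (Nat.le_succ h) (ih b (h+1) q hq)
      · rw [spa_skip rest hL hcb] at hq
        exact le_trans (Nat.le_succ h) (ih c (h+1) q hq)

lemma spa_cols_sorted : ∀ (R : Cols) (c h : ℕ),
    List.Pairwise (· < ·) ((scanPathAux c h R).1.map Prod.fst) := by
  intro R
  induction R with
  | nil => intro c h; simp [spa_nil]
  | cons col rest ih =>
    intro c h
    cases hL : col.getLast? with
    | none => rw [spa_none rest hL]; exact ih c (h+1)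
    | some b =>
      by_cases hcb : c ≤ b
      · rw [spa_take rest hL hcb]
        refine List.pairwise_cons.mpr ⟨?_, ih b (h+1)⟩
        intro x hx
        rcases List.mem_map.mp hx with ⟨q, hq, rfl⟩
        exact lt_of_lt_of_le (Nat.lt_succ_self h) (spa_lb rest b (h+1) q hq)
      · rw [spa_skip rest hL hcb]; exact ih c (h+1)

lemma spa_box : ∀ (R : Cols) (c h : ℕ), ∀ q ∈ (scanPathAux c h R).1,
    ∃ m, m < R.length ∧ q = (h + m, (R.getD m []).length) ∧ R.getD m [] ≠ [] := by
  intro R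
  induction R with
  | nil => intro c h q hq; simp [spa_nil] at hq
  | cons col rest ih =>
    intro c h q hq
    have step : ∀ c', q ∈ (scanPathAux c' (h+1) rest).1 →
        ∃ m, m < (col :: rest).length ∧ q = (h + m, ((col :: rest).getD m []).length) ∧
          (col :: rest).getD m [] ≠ [] := by
      intro c' hq'
      rcases ih c' (h+1) q hq' with ⟨m, hm, hq2, hne⟩
      exact ⟨m + 1, by simpa using Nat.succ_lt_succ hm,
        by simpa [Nat.add_assoc, Nat.add_comm 1 m] using hq2, by simpa using hne⟩
    cases hL : col.getLast? with
    | none => rw [spa_none rest hL] at hq; exact step c hq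
    | some b =>
      by_cases hcb : c ≤ b
      · rw [spa_take rest hL hcb] at hq
        rcases List.mem_cons.mp hq with rfl | hq
        · exact ⟨0, by simp, by simp, by simpa using (getLast?_some hL).1⟩
        · exact step b hq
      · rw [spa_skip rest hL hcb] at hq; exact step c hq

lemma spa_out_prefix : ∀ (R : Cols) (c h m : ℕ),
    (scanPathAux c h R).2.getD m [] <+: R.getD m [] := by
  intro R
  induction R with
  | nil => intro c h m; simp [spa_nil]
  | cons col rest ih =>
    intro c h m
    cases hL : col.getLast? with
    | none =>
      rw [spa_none rest hL]
      cases m with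
      | zero => simp
      | succ m => simpa using ih c (h+1) m
    | some b =>
      by_cases hcb : c ≤ b
      · rw [spa_take rest hL hcb]
        cases m with
        | zero => simpa using col.dropLast_prefix
        | succ m => simpa using ih b (h+1) m
      · rw [spa_skip rest hL hcb]
        cases m with
        | zero => simp
        | succ m => simpa using ih c (h+1) m

lemma spa_dichotomy : ∀ (R : Cols) (c h m : ℕ),
    ((scanPathAux c h R).2.getD m [] = R.getD m [] ∧
      ∀ r, (h + m, r) ∉ (scanPathAux c h R).1) ∨
    (R.getD m [] ≠ [] ∧ (scanPathAux c h R).2.getD m [] = (R.getD m []).dropLast ∧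
      ∀ r, ((h + m, r) ∈ (scanPathAux c h R).1 ↔ r = (R.getD m []).length)) := by
  intro R
  induction R with
  | nil => intro c h m; left; simp [spa_nil]
  | cons col rest ih =>
    intro c h m
    have shift : ∀ (P : Cols) (m : ℕ), (col :: P).getD (m+1) [] = P.getD m [] := by
      intro P m; simp
    cases hL : col.getLast? with
    | none =>
      rw [spa_none rest hL]
      cases m with
      | zero =>
        left
        refine ⟨by simp, fun r hr => ?_⟩
        have := spa_lb rest c (h+1) _ hr
        simp at this
      | succ m =>
        rcases ih c (h+1) m with ⟨h1, h2⟩ | ⟨h0, h1, h2⟩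
        · left
          refine ⟨by simpa using h1, fun r => ?_⟩
          have := h2 r
          simpa [Nat.add_assoc, Nat.add_comm 1 m] using this
        · right
          refine ⟨by simpa using h0, by simpa using h1, fun r => ?_⟩
          have := h2 r
          simpa [Nat.add_assoc, Nat.add_comm 1 m] using this
    | some b =>
      by_cases hcb : c ≤ b
      · rw [spa_take rest hL hcb]
        cases m with
        | zero =>
          right
          refine ⟨(getLast?_some hL).1, by simp, fun r => ?_⟩
          simp only [Nat.add_zero, List.mem_cons]
          constructor
          · intro hr
            rcases hr with heq | hmem
            · simpa [Prod.ext_iff] using heq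
            · have := spa_lb rest b (h+1) _ hmem
              simp at this
          · rintro rfl
            exact Or.inl (by simp)
        | succ m =>
          have hne : h ≠ h + (m + 1) := by omega
          rcases ih b (h+1) m with ⟨h1, h2⟩ | ⟨h0, h1, h2⟩
          · left
            refine ⟨by simpa using h1, fun r hr => ?_⟩
            rcases List.mem_cons.mp hr with heq | hmem
            · have h' : h + (m+1) = h := congrArg Prod.fst heq
              omega
            · exact h2 r (by simpa [Nat.add_assoc, Nat.add_comm 1 m] using hmem)
          · right
            refine ⟨by simpa using h0, by simpa using h1, fun r => ?_⟩
            have h2' := h2 r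
            rw [shift]
            constructor
            · intro hr
              rcases List.mem_cons.mp hr with heq | hmem
              · exfalso
                have h' : h + (m+1) = h := congrArg Prod.fst heq
                omega
              · exact h2'.mp (by simpa [Nat.add_assoc, Nat.add_comm 1 m] using hmem)
            · intro hr
              right
              have := h2'.mpr hr
              exact (show (h + (m + 1), r) ∈ (scanPathAux b (h + 1) rest).1 by simpa [Nat.add_assoc, Nat.add_comm 1 m] using this)
      · rw [spa_skip rest hL hcb]
        cases m with
        | zero =>
          left
          refine ⟨by simp, fun r hr => ?_⟩
          have := spa_lb rest c (h+1) _ hr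
          simp at this
        | succ m =>
          rcases ih c (h+1) m with ⟨h1, h2⟩ | ⟨h0, h1, h2⟩
          · left
            refine ⟨by simpa using h1, fun r => ?_⟩
            have := h2 r
            simpa [Nat.add_assoc, Nat.add_comm 1 m] using this
          · right
            refine ⟨by simpa using h0, by simpa using h1, fun r => ?_⟩
            have := h2 r
            simpa [Nat.add_assoc, Nat.add_comm 1 m] using this

lemma spa_out_len : ∀ (R : Cols) (c h : ℕ), (scanPathAux c h R).2.length = R.length := by
  intro R
  induction R with
  | nil => intro c h; simp [spa_nil]
  | cons col rest ih =>
    intro c h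
    cases hL : col.getLast? with
    | none => rw [spa_none rest hL]; simpa using ih c (h+1)
    | some b =>
      by_cases hcb : c ≤ b
      · rw [spa_take rest hL hcb]; simpa using ih b (h+1)
      · rw [spa_skip rest hL hcb]; simpa using ih c (h+1)

lemma entv_eq (T : Cols) (g m r : ℕ) :
    entv T (g + 1 + m, r) = (T.getD (g + m) []).getD (r - 1) 0 := by
  have : g + 1 + m - 1 = g + m := by omega
  simp [entv, entryAt, this]

lemma spa_head_val {T : Cols} {g : ℕ} {col : List ℕ} {b : ℕ}
    (hpre : col <+: T.getD g []) (hL : col.getLast? = some b) :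
    entv T (g + 1, col.length) = b := by
  obtain ⟨hne, hb⟩ := getLast?_some hL
  have hlen : 0 < col.length := List.length_pos_iff.mpr hne
  have := entv_eq T g 0 col.length
  rw [Nat.add_zero] at this
  rw [this, hb]
  exact (pref_getD hpre (by omega) 0).symm

lemma spa_vals (T : Cols) : ∀ (R : Cols) (c g : ℕ), PrefSt T g R →
    List.Chain' (· ≤ ·) (c :: (scanPathAux c (g+1) R).1.map (entv T)) := by
  intro R
  induction R with
  | nil => intro c g _; simp [spa_nil]; exact List.isChain_singleton _
  | cons col rest ih =>
    intro c g hpre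
    cases hL : col.getLast? with
    | none => rw [spa_none rest hL]; exact ih c (g+1) (prefst_shift hpre)
    | some b =>
      by_cases hcb : c ≤ b
      · rw [spa_take rest hL hcb]
        have hhead : entv T (g + 1, col.length) = b :=
          spa_head_val (by simpa using hpre 0) hL
        simp only [List.map_cons, hhead]
        exact List.isChain_cons_cons.mpr ⟨hcb, ih b (g+1) (prefst_shift hpre)⟩
      · rw [spa_skip rest hL hcb]; exact ih c (g+1) (prefst_shift hpre)

lemma spa_take_iff (T : Cols) : ∀ (R : Cols) (c g m : ℕ), PrefSt T g R →
    R.getD m [] ≠ [] →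
    ((g + 1 + m, (R.getD m []).length) ∈ (scanPathAux c (g+1) R).1 ↔
      (((scanPathAux c (g+1) R).1.filter (fun q => q.1 < g + 1 + m)).map (entv T)).getLastD c
        ≤ entv T (g + 1 + m, (R.getD m []).length)) := by
  intro R
  induction R with
  | nil => intro c g m _ hne; simp [getD_nil'] at hne
  | cons col rest ih =>
    intro c g m hpre hne
    cases m with
    | zero =>
      simp only [List.getD_cons_zero] at hne ⊢
      obtain ⟨b, hL⟩ := getLast?_of_ne_nil hne
      have hhead : entv T (g + 1 + 0, col.length) = b :=
        by simpa using spa_head_val (by simpa using hpre 0) hL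
      by_cases hcb : c ≤ b
      · rw [spa_take rest hL hcb]
        have hfil : List.filter (fun q => decide (q.1 < g + 1 + 0))
            ((g+1, col.length) :: (scanPathAux b (g+1+1) rest).1) = [] := by
          rw [List.filter_eq_nil_iff]
          intro q hq
          rcases List.mem_cons.mp hq with rfl | hq
          · simp
          · have := spa_lb rest b (g+1+1) q hq
            simp only [decide_eq_true_eq]
            omega
        rw [hfil]
        simp only [List.map_nil, List.getLastD_nil, hhead]
        constructor
        · intro _; exact hcb
        · intro _; left
      · rw [spa_skip rest hL hcb]
        have hfil : List.filter (fun q => decide (q.1 < g + 1 + 0))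
            (scanPathAux c (g+1+1) rest).1 = [] := by
          rw [List.filter_eq_nil_iff]
          intro q hq
          have := spa_lb rest c (g+1+1) q hq
          simp only [decide_eq_true_eq]
          omega
        rw [hfil]
        simp only [List.map_nil, List.getLastD_nil, hhead]
        constructor
        · intro hmem
          rcases spa_box rest c (g+1+1) _ hmem with ⟨m', _, heq, _⟩
          have := congrArg Prod.fst heq
          simp at this; omega
        · intro hle; exact absurd hle hcb
    | succ m =>
      simp only [List.getD_cons_succ] at hne ⊢
      have harith : g + 1 + (m + 1) = (g + 1) + 1 + m := by omega
      cases hL : col.getLast? with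
      | none =>
        rw [spa_none rest hL]
        have := ih c (g+1) m (prefst_shift hpre) hne
        rw [harith]
        exact this
      | some b =>
        by_cases hcb : c ≤ b
        · rw [spa_take rest hL hcb]
          have hhead : entv T (g + 1, col.length) = b :=
            spa_head_val (by simpa using hpre 0) hL
          have hmem_iff : ((g + 1 + (m+1), (rest.getD m []).length) ∈
              ((g+1, col.length) :: (scanPathAux b (g+1+1) rest).1)) ↔
              ((g + 1 + (m+1), (rest.getD m []).length) ∈ (scanPathAux b (g+1+1) rest).1) := by
            simp only [List.mem_cons]
            constructor
            · rintro (heq | h)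
              · exfalso
                have h' : g + 1 + (m+1) = g + 1 := congrArg Prod.fst heq
                omega
              · exact h
            · intro h; right; exact h
          have hfil : List.filter (fun q => decide (q.1 < g + 1 + (m+1)))
              ((g+1, col.length) :: (scanPathAux b (g+1+1) rest).1) =
              (g+1, col.length) :: List.filter (fun q => decide (q.1 < g + 1 + (m+1)))
                (scanPathAux b (g+1+1) rest).1 := by
            rw [List.filter_cons_of_pos (by simp only [decide_eq_true_eq]; omega)]
          rw [hmem_iff, hfil]
          simp only [List.map_cons, List.getLastD_cons, hhead]
          have := ih b (g+1) m (prefst_shift hpre) hne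
          rw [harith]
          exact this
        · rw [spa_skip rest hL hcb]
          have := ih c (g+1) m (prefst_shift hpre) hne
          rw [harith]
          exact this

lemma spa_des (T : Cols)
    (hrow : ∀ m k, k < (T.getD (m+1) []).length →
      (T.getD m []).getD k 0 ≤ (T.getD (m+1) []).getD k 0) :
    ∀ (R : Cols) (c g : ℕ), PrefSt T g R → DesSt R → DesSt (scanPathAux c (g+1) R).2 := by
  intro R
  induction R with
  | nil => intro c g _ _; simp [spa_nil]; intro m; simp [getD_nil']
  | cons col rest ih =>
    intro c g hpre hdes
    obtain ⟨hd1, hd2⟩ := desSt_cons.mp hdes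
    cases hL : col.getLast? with
    | none =>
      rw [spa_none rest hL]
      have hcolnil : col = [] := by
        rcases col.eq_nil_or_concat with rfl | ⟨l, a, rfl⟩
        · rfl
        · simp at hL
      subst hcolnil
      refine desSt_cons.mpr ⟨?_, ih c (g+1) (prefst_shift hpre) hd2⟩
      have h0 : (rest.getD 0 []).length = 0 := by simpa using hd1
      have := (spa_out_prefix rest c (g+1+1) 0).length_le
      simp only [List.getD_cons_zero, List.length_nil]
      omega
    | some b =>
      by_cases hcb : c ≤ b
      · rw [spa_take rest hL hcb]
        refine desSt_cons.mpr ⟨?_, ih b (g+1) (prefst_shift hpre) hd2⟩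
        rw [List.length_dropLast]
        by_cases hρ : (rest.getD 0 []).length ≤ col.length - 1
        · exact le_trans (spa_out_prefix rest b (g+1+1) 0).length_le hρ
        · -- the first remaining column has full length; it must be taken
          have hlc : 0 < col.length := List.length_pos_iff.mpr (getLast?_some hL).1
          have hρeq : (rest.getD 0 []).length = col.length := by omega
          cases rest with
          | nil => simp [getD_nil'] at hρeq; omega
          | cons c₂ rest' =>
            simp only [List.getD_cons_zero] at hρeq
            have hc₂ : c₂ ≠ [] := by
              intro h; rw [h] at hρeq; simp at hρeq; omega
            obtain ⟨b₂, hL₂⟩ := getLast?_of_ne_nil hc₂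
            have hb : b = (T.getD g []).getD (col.length - 1) 0 := by
              obtain ⟨-, hb⟩ := getLast?_some hL
              rw [hb]
              exact pref_getD (by simpa using hpre 0) (by omega) 0
            have hb₂ : b₂ = (T.getD (g+1) []).getD (col.length - 1) 0 := by
              obtain ⟨-, hb₂⟩ := getLast?_some hL₂
              rw [hb₂, hρeq]
              exact pref_getD (by simpa using hpre 1) (by omega) 0
            have hbb : b ≤ b₂ := by
              rw [hb, hb₂]
              apply hrow
              have := (by simpa using hpre 1 : c₂ <+: T.getD (g+1) []).length_le
              omega
            rw [spa_take rest' hL₂ hbb]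
            simp [hρeq]
      · rw [spa_skip rest hL hcb]
        refine desSt_cons.mpr ⟨?_, ih c (g+1) (prefst_shift hpre) hd2⟩
        exact le_trans (spa_out_prefix rest c (g+1+1) 0).length_le hd1

lemma getD_append_lt {Q : List (List (ℕ × ℕ))} {P : List (List (ℕ × ℕ))} {n : ℕ}
    (h : n < Q.length) : (Q ++ P).getD n [] = Q.getD n [] := by
  rw [List.getD_eq_getElem?_getD, List.getD_eq_getElem?_getD, List.getElem?_append_left h]

lemma getD_append_ge {Q : List (List (ℕ × ℕ))} {P : List (List (ℕ × ℕ))} {n : ℕ}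
    (h : Q.length ≤ n) : (Q ++ P).getD n [] = P.getD (n - Q.length) [] := by
  rw [List.getD_eq_getElem?_getD, List.getD_eq_getElem?_getD, List.getElem?_append_right h]

lemma getD_len_le {P : List (List (ℕ × ℕ))} {n : ℕ} (h : P.length ≤ n) :
    P.getD n [] = [] := by
  rw [List.getD_eq_getElem?_getD, List.getElem?_eq_none h]
  rfl

lemma colMono {L : List ℕ} (h : List.Chain' (· < ·) L) {s t : ℕ} (hst : s ≤ t)
    (ht : t < L.length) : L.getD s 0 ≤ L.getD t 0 := by
  have hp := List.isChain_iff_pairwise.mp h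
  rcases Nat.lt_or_ge s t with hlt | hge
  · have := List.pairwise_iff_getElem.mp hp s t (lt_trans hlt ht) ht hlt
    rw [List.getD_eq_getElem?_getD, List.getD_eq_getElem?_getD,
      List.getElem?_eq_getElem (lt_trans hlt ht), List.getElem?_eq_getElem ht]
    exact le_of_lt this
  · have : s = t := le_antisymm hst hge
    rw [this]

/-- Unfolding lemmas for `scanColPathsAux`. -/
lemma scp_zero (j : ℕ) (col : List ℕ) (rest : Cols) :
    scanColPathsAux j 0 col rest = [] := rfl

lemma scp_succ {j f : ℕ} {col : List ℕ} {b : ℕ} (rest : Cols)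
    (hL : col.getLast? = some b) :
    scanColPathsAux j (f+1) col rest =
      scanColPathsAux j f col.dropLast (scanPathAux b (j+1) rest).2 ++
        [(j, col.length) :: (scanPathAux b (j+1) rest).1] := by
  simp [scanColPathsAux, hL]

/-- The full invariant for the list of scanning paths from column `j`. -/
structure GoodOut (T : Cols) (j f : ℕ) (rest : Cols) (Out : List (List (ℕ × ℕ))) : Prop where
  len : Out.length = f
  head : ∀ i, 1 ≤ i → i ≤ f → ∃ p, Out.getD (i-1) [] = (j, i) :: p ∧ ∀ q ∈ p, j + 1 ≤ q.1
  bval : ∀ i q, 1 ≤ i → q ∈ Out.getD (i-1) [] →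
    1 ≤ q.2 ∧ j ≤ q.1 ∧ (q.1 = j → q.2 = i) ∧
      (j < q.1 → q.2 ≤ (rest.getD (q.1 - j - 1) []).length)
  exis : ∀ l k, j < l → 1 ≤ k → k ≤ (rest.getD (l - j - 1) []).length →
    ∃ i, 1 ≤ i ∧ i ≤ f ∧ (l, k) ∈ Out.getD (i-1) []
  uniq : ∀ i i' q, 1 ≤ i → 1 ≤ i' → q ∈ Out.getD (i-1) [] → q ∈ Out.getD (i'-1) [] → i = i'
  ord : ∀ i i' l k k', 1 ≤ i → 1 ≤ i' → (l, k) ∈ Out.getD (i-1) [] →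
    (l, k') ∈ Out.getD (i'-1) [] → k < k' → i < i'
  rowle : ∀ i l k, 1 ≤ i → (l, k) ∈ Out.getD (i-1) [] → k ≤ i
  aword : ∀ i i' l k, 1 ≤ i → 1 ≤ i' → j + 1 < l → (l - 1, k) ∈ Out.getD (i-1) [] →
    (l, k) ∈ Out.getD (i'-1) [] → i ≤ i'
  cols : ∀ i, 1 ≤ i → List.Pairwise (· < ·) ((Out.getD (i-1) []).map Prod.fst)
  vals : ∀ i, 1 ≤ i → List.Chain' (· ≤ ·) ((Out.getD (i-1) []).map (entv T))
  dcl : ∀ i i' l k, 1 ≤ i → i < i' → i' ≤ f → j < l → (l, k) ∈ Out.getD (i-1) [] →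
    entv T (l, k) <
        (((Out.getD (i'-1) []).filter (fun q => decide (q.1 < l))).map (entv T)).getLastD 0 ∨
      ∃ ρ, k < ρ ∧ (l, ρ) ∈ Out.getD (i'-1) []

theorem good_main (T : Cols) (j : ℕ) (hj : 1 ≤ j)
    (hrow : ∀ m k, k < (T.getD (m+1) []).length →
      (T.getD m []).getD k 0 ≤ (T.getD (m+1) []).getD k 0)
    (hcols : ∀ m, List.Chain' (· < ·) (T.getD m [])) :
    ∀ (f : ℕ) (col : List ℕ) (rest : Cols), col <+: T.getD (j-1) [] → col.length = f →
      PrefSt T j rest → DesSt (col :: rest) →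
      GoodOut T j f rest (scanColPathsAux j f col rest) := by
  intro f
  induction f with
  | zero =>
    intro col rest hpc hlen hpre hdes
    rw [scp_zero]
    have hnil : ∀ i : ℕ, (([] : List (List (ℕ × ℕ))).getD (i-1) []) = [] := fun i => by
      cases (i-1) <;> rfl
    refine ⟨rfl, ?_, ?_, ?_, ?_, ?_, ?_, ?_, ?_, ?_, ?_⟩
    · intro i h1 h0; omega
    · intro i q h1 hq; rw [hnil] at hq; simp at hq
    · intro l k hl hk1 hk2
      exfalso
      have h2 := desMono hdes 0 (l - j - 1 + 1) (by omega)
      simp only [List.getD_cons_succ, List.getD_cons_zero] at h2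
      rw [List.length_eq_zero_iff.mp hlen] at h2
      simp only [List.length_nil, Nat.le_zero] at h2
      omega
    · intro i i' q h1 h1' hq hq'; rw [hnil] at hq; simp at hq
    · intro i i' l k k' h1 h1' hq hq' hkk; rw [hnil] at hq; simp at hq
    · intro i l k h1 hq; rw [hnil] at hq; simp at hq
    · intro i i' l k h1 h1' hl hq hq'; rw [hnil] at hq; simp at hq
    · intro i h1; rw [hnil]; simp
    · intro i h1; rw [hnil]; simp; exact List.isChain_nil
    · intro i i' l k h1 hii hif hl hq; omega
  | succ f ih =>
    intro col rest hpc hlen hpre hdes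
    have hcne : col ≠ [] := by intro h; rw [h] at hlen; simp at hlen
    obtain ⟨b, hL⟩ := getLast?_of_ne_nil hcne
    rw [scp_succ rest hL]
    set r1 := (scanPathAux b (j+1) rest).1 with hr1
    set r2 := (scanPathAux b (j+1) rest).2 with hr2
    set p₁ := (j, col.length) :: r1 with hp₁
    -- head value
    have hJ : j - 1 + 1 = j := by omega
    have hheadv : entv T (j, col.length) = b := by
      have := spa_head_val (T := T) (g := j - 1) hpc hL
      rwa [hJ] at this
    have hdesrest : DesSt rest := (desSt_cons.mp hdes).2
    have hdes2 : DesSt r2 := spa_des T hrow rest b j hpre hdesrest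
    -- head length condition for the recursive state
    have hd1 : (rest.getD 0 []).length ≤ col.length := (desSt_cons.mp hdes).1
    have hr2head : (r2.getD 0 []).length ≤ f := by
      by_cases hρ : (rest.getD 0 []).length ≤ f
      · exact le_trans (spa_out_prefix rest b (j+1) 0).length_le hρ
      · have hρeq : (rest.getD 0 []).length = f + 1 := by omega
        cases hrest : rest with
        | nil => rw [hrest] at hρeq; simp [getD_nil'] at hρeq
        | cons c₂ rest' =>
          rw [hrest] at hρeq
          simp only [List.getD_cons_zero] at hρeq
          have hc₂ : c₂ ≠ [] := by intro h; rw [h] at hρeq; simp at hρeq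
          obtain ⟨b₂, hL₂⟩ := getLast?_of_ne_nil hc₂
          have hb : b = (T.getD (j-1) []).getD (col.length - 1) 0 := by
            obtain ⟨-, hb⟩ := getLast?_some hL
            rw [hb]; exact pref_getD hpc (by omega) 0
          have hb₂ : b₂ = (T.getD j []).getD (col.length - 1) 0 := by
            obtain ⟨-, hb₂⟩ := getLast?_some hL₂
            rw [hb₂, hρeq, hlen]
            have h0 := hpre 0
            rw [hrest] at h0
            simp only [List.getD_cons_zero, Nat.add_zero] at h0
            exact pref_getD h0 (by omega) 0
          have hbb : b ≤ b₂ := by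
            rw [hb, hb₂]
            have heq : T.getD (j - 1 + 1) [] = T.getD j [] := by rw [hJ]
            have h0 := hpre 0
            rw [hrest] at h0
            simp only [List.getD_cons_zero, Nat.add_zero] at h0
            have hlen2 : col.length - 1 < (T.getD j []).length := by
              have := h0.length_le; omega
            have := hrow (j-1) (col.length - 1) (by rwa [hJ])
            rwa [hJ] at this
          rw [hr2, hrest, spa_take rest' hL₂ hbb]
          simp only [List.getD_cons_zero, List.length_dropLast]
          omega
    have hpre2 : PrefSt T j r2 := fun m =>
      (spa_out_prefix rest b (j+1) m).trans (hpre m)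
    have hdlen : col.dropLast.length = f := by
      rw [List.length_dropLast, hlen]
      omega
    have hG : GoodOut T j f r2 (scanColPathsAux j f col.dropLast r2) :=
      ih col.dropLast r2 (col.dropLast_prefix.trans hpc) hdlen
        hpre2 (desSt_cons.mpr ⟨by rw [hdlen]; exact hr2head, hdes2⟩)
    set Q := scanColPathsAux j f col.dropLast r2 with hQ
    -- indexing
    have hQlen : Q.length = f := hG.len
    have houtQ : ∀ i, 1 ≤ i → i ≤ f → (Q ++ [p₁]).getD (i-1) [] = Q.getD (i-1) [] := by
      intro i h1 h2; exact getD_append_lt (by omega)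
    have houtL : (Q ++ [p₁]).getD ((f+1)-1) [] = p₁ := by
      rw [getD_append_ge (by omega)]
      simp [hQlen]
    have memOut : ∀ i q, 1 ≤ i → q ∈ (Q ++ [p₁]).getD (i-1) [] →
        (i ≤ f ∧ q ∈ Q.getD (i-1) []) ∨ (i = f + 1 ∧ q ∈ p₁) := by
      intro i q h1 hq
      by_cases h2 : i ≤ f
      · exact Or.inl ⟨h2, by rwa [houtQ i h1 h2] at hq⟩
      · by_cases h3 : i = f + 1
        · subst h3; exact Or.inr ⟨rfl, by rwa [houtL] at hq⟩
        · exfalso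
          rw [getD_len_le (by simp [hQlen]; omega)] at hq
          simp at hq
    -- basic facts about p₁'s members
    have hp₁mem : ∀ q ∈ p₁, q = (j, col.length) ∨
        ∃ m, m < rest.length ∧ q = (j + 1 + m, (rest.getD m []).length) ∧
          rest.getD m [] ≠ [] := by
      intro q hq
      rcases List.mem_cons.mp hq with rfl | hq
      · exact Or.inl rfl
      · exact Or.inr (spa_box rest b (j+1) q hq)
    -- a member of r1 forces the column to be consumed in r2
    have hconsume : ∀ m, (∃ ρ, (j + 1 + m, ρ) ∈ r1) →
        rest.getD m [] ≠ [] ∧ (r2.getD m []).length + 1 = (rest.getD m []).length ∧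
          ∀ ρ, ((j + 1 + m, ρ) ∈ r1 ↔ ρ = (rest.getD m []).length) := by
      intro m ⟨ρ, hρ⟩
      rcases spa_dichotomy rest b (j+1) m with ⟨h1, h2⟩ | ⟨h0, h1, h2⟩
      · exact absurd hρ (h2 ρ)
      · refine ⟨h0, ?_, h2⟩
        rw [← hr2] at h1
        rw [h1, List.length_dropLast]
        have := List.length_pos_iff.mpr h0
        omega
    -- membership in a Q-path bounds row by r2 length
    have hQbnd : ∀ i l k, 1 ≤ i → (l, k) ∈ Q.getD (i-1) [] → j < l →
        1 ≤ k ∧ k ≤ (r2.getD (l - j - 1) []).length := by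
      intro i l k h1 hq hl
      have := hG.bval i (l, k) h1 hq
      exact ⟨this.1, this.2.2.2 hl⟩
    constructor
    -- len
    · simp [hQlen]
    -- head
    · intro i h1 h2
      by_cases hif : i ≤ f
      · rw [houtQ i h1 hif]; exact hG.head i h1 hif
      · have : i = f + 1 := by omega
        subst this
        rw [houtL]
        refine ⟨r1, by rw [hp₁, hlen], fun q hq => spa_lb rest b (j+1) q hq⟩
    -- bval
    · intro i q h1 hq
      rcases memOut i q h1 hq with ⟨h2, hq2⟩ | ⟨hieq, hq2⟩
      · obtain ⟨ha, hb', hc, hd⟩ := hG.bval i q h1 hq2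
        refine ⟨ha, hb', hc, fun hl => ?_⟩
        exact le_trans (hd hl) (spa_out_prefix rest b (j+1) _).length_le
      · subst hieq
        rcases hp₁mem q hq2 with rfl | ⟨m, hm, rfl, hne⟩
        · refine ⟨by omega, le_refl _, fun _ => by omega, fun hl => by omega⟩
        · refine ⟨by have := List.length_pos_iff.mpr hne; simp at this ⊢; omega, by simp; omega,
            fun h => by omega, fun _ => ?_⟩
          have : j + 1 + m - j - 1 = m := by omega
          rw [this]
    -- exis
    · intro l k hl hk1 hk2
      set m0 := l - j - 1 with hm0
      have hlm0 : j + 1 + m0 = l := by omega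
      by_cases hk3 : k ≤ (r2.getD m0 []).length
      · obtain ⟨i, h1, h2, h3⟩ := hG.exis l k hl hk1 hk3
        exact ⟨i, h1, by omega, by rwa [houtQ i h1 h2]⟩
      · rcases spa_dichotomy rest b (j+1) m0 with ⟨h1, h2⟩ | ⟨h0, h1, h2⟩
        · exfalso; rw [← hr2] at h1; rw [h1] at hk3; omega
        · rw [← hr2] at h1
          have hk4 : k = (rest.getD m0 []).length := by
            rw [h1, List.length_dropLast] at hk3
            omega
          refine ⟨f + 1, by omega, le_refl _, ?_⟩
          rw [houtL, hp₁]
          exact List.mem_cons.mpr (Or.inr (by rw [hlm0] at h2; exact (h2 k).mpr hk4))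
    -- uniq
    · intro i i' q h1 h1' hq hq'
      have key : ∀ a a', 1 ≤ a → 1 ≤ a' → a ≤ f → a' = f + 1 →
          q ∈ Q.getD (a-1) [] → q ∈ p₁ → False := by
        intro a a' ha ha' haf ha'f hqa hqp
        obtain ⟨hk1, hk2, hk3, hk4⟩ := hG.bval a q ha hqa
        rcases hp₁mem q hqp with rfl | ⟨m, hm, rfl, hne⟩
        · have := hk3 rfl; simp at this; omega
        · have hlt : j < j + 1 + m := by omega
          have hbd := hk4 hlt
          have : j + 1 + m - j - 1 = m := by omega
          rw [this] at hbd
          obtain ⟨-, hlen2, -⟩ := hconsume m ⟨(rest.getD m []).length, by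
            rcases List.mem_cons.mp hqp with heq | h
            · exfalso; have := congrArg Prod.fst heq; simp at this; omega
            · exact h⟩
          omega
      rcases memOut i q h1 hq with ⟨h2, hq2⟩ | ⟨hieq, hq2⟩ <;>
        rcases memOut i' q h1' hq' with ⟨h2', hq2'⟩ | ⟨hieq', hq2'⟩
      · exact hG.uniq i i' q h1 h1' hq2 hq2'
      · exact (key i i' h1 h1' h2 hieq' hq2 hq2').elim
      · exact (key i' i h1' h1 h2' hieq hq2' hq2).elim
      · omega
    -- ord
    · intro i i' l k k' h1 h1' hq hq' hkk
      rcases memOut i (l,k) h1 hq with ⟨h2, hq2⟩ | ⟨hieq, hq2⟩ <;>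
        rcases memOut i' (l,k') h1' hq' with ⟨h2', hq2'⟩ | ⟨hieq', hq2'⟩
      · exact hG.ord i i' l k k' h1 h1' hq2 hq2' hkk
      · omega
      · -- (l,k) ∈ p₁, (l,k') ∈ Q-path : contradiction with k < k'
        exfalso
        rcases hp₁mem _ hq2 with heq | ⟨m, hm, heq, hne⟩
        · have hlj : l = j := congrArg Prod.fst heq
          have hkc : k = col.length := congrArg Prod.snd heq
          obtain ⟨-, -, hk3, -⟩ := hG.bval i' (l,k') h1' hq2'
          have := hk3 hlj
          omega
        · have hlj : l = j + 1 + m := congrArg Prod.fst heq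
          have hkc : k = (rest.getD m []).length := congrArg Prod.snd heq
          have hlt : j < l := by omega
          obtain ⟨-, hbd⟩ := hQbnd i' l k' h1' hq2' hlt
          have hmm : l - j - 1 = m := by omega
          rw [hmm] at hbd
          obtain ⟨-, hlen2, -⟩ := hconsume m ⟨k, by
            rcases List.mem_cons.mp hq2 with heq' | h
            · exfalso
              have h1 := congrArg Prod.fst heq'
              simp at h1; omega
            · rwa [← hlj]⟩
          omega
      · -- both in p₁ : impossible with k < k'
        exfalso
        rcases hp₁mem _ hq2 with heq | ⟨m, hm, heq, hne⟩ <;>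
          rcases hp₁mem _ hq2' with heq' | ⟨m', hm', heq', hne'⟩
        · have := congrArg Prod.snd heq; have := congrArg Prod.snd heq'
          simp at *; omega
        · have hl1 : l = j := congrArg Prod.fst heq
          have hl2 : l = j + 1 + m' := congrArg Prod.fst heq'
          omega
        · have hl1 : l = j := congrArg Prod.fst heq'
          have hl2 : l = j + 1 + m := congrArg Prod.fst heq
          omega
        · have hl1 : l = j + 1 + m := congrArg Prod.fst heq
          have hl2 : l = j + 1 + m' := congrArg Prod.fst heq'
          have : m = m' := by omega
          subst this
          have := congrArg Prod.snd heq; have := congrArg Prod.snd heq'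
          simp at *; omega
    -- rowle
    · intro i l k h1 hq
      rcases memOut i (l,k) h1 hq with ⟨h2, hq2⟩ | ⟨hieq, hq2⟩
      · exact le_trans (hG.rowle i l k h1 hq2) (le_refl i)
      · rcases hp₁mem _ hq2 with heq | ⟨m, hm, heq, hne⟩
        · have := congrArg Prod.snd heq
          simp at this; omega
        · have hkc : k = (rest.getD m []).length := congrArg Prod.snd heq
          have := desMono hdes 0 (m+1) (by omega)
          simp only [List.getD_cons_zero, List.getD_cons_succ] at this
          omega
    -- aword
    · intro i i' l k h1 h1' hl hq hq'
      rcases memOut i ((l-1),k) h1 hq with ⟨h2, hq2⟩ | ⟨hieq, hq2⟩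
      · rcases memOut i' (l,k) h1' hq' with ⟨h2', hq2'⟩ | ⟨hieq', hq2'⟩
        · exact hG.aword i i' l k h1 h1' hl hq2 hq2'
        · omega
      · -- (l-1,k) ∈ p₁ with l-1 > j, so column l-1 is consumed; contradiction if i' ≤ f
        rcases memOut i' (l,k) h1' hq' with ⟨h2', hq2'⟩ | ⟨hieq', hq2'⟩
        · exfalso
          rcases hp₁mem _ hq2 with heq | ⟨m, hm, heq, hne⟩
          · have := congrArg Prod.fst heq; simp at this; omega
          · have hl1 : l - 1 = j + 1 + m := congrArg Prod.fst heq
            have hkc : k = (rest.getD m []).length := congrArg Prod.snd heq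
            obtain ⟨-, hlen2, -⟩ := hconsume m ⟨k, by
              rcases List.mem_cons.mp hq2 with heq' | h
              · exfalso; have := congrArg Prod.fst heq'; simp at this; omega
              · rwa [← hl1]⟩
            obtain ⟨hk1, hbd⟩ := hQbnd i' l k h1' hq2' (by omega)
            have hdr := hdes2 m
            have hmm : l - j - 1 = m + 1 := by omega
            rw [hmm] at hbd
            omega
        · omega
    -- cols
    · intro i h1
      by_cases hif : i ≤ f
      · rw [houtQ i h1 hif]; exact hG.cols i h1
      · by_cases hi2 : i = f + 1
        · subst hi2
          rw [houtL, hp₁]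
          simp only [List.map_cons]
          refine List.pairwise_cons.mpr ⟨?_, spa_cols_sorted rest b (j+1)⟩
          intro x hx
          rcases List.mem_map.mp hx with ⟨q, hq, rfl⟩
          have := spa_lb rest b (j+1) q hq
          omega
        · rw [getD_len_le (by simp [hQlen]; omega)]
          simp
    -- vals
    · intro i h1
      by_cases hif : i ≤ f
      · rw [houtQ i h1 hif]; exact hG.vals i h1
      · by_cases hi2 : i = f + 1
        · subst hi2
          rw [houtL, hp₁]
          simp only [List.map_cons, hheadv]
          exact spa_vals T rest b j hpre
        · rw [getD_len_le (by simp [hQlen]; omega)]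
          simp; exact List.isChain_nil
    -- dcl
    · intro i i' l k h1 hii hif hl hq
      rcases memOut i (l,k) h1 hq with ⟨h2, hq2⟩ | ⟨hieq, hq2⟩
      · by_cases hi'f : i' ≤ f
        · have := hG.dcl i i' l k h1 hii hi'f hl hq2
          rw [houtQ i' (by omega) hi'f]
          exact this
        · have hi'eq : i' = f + 1 := by omega
          subst hi'eq
          rw [houtL]
          -- the crucial case
          set m0 := l - j - 1 with hm0
          have hlm0 : j + 1 + m0 = l := by omega
          obtain ⟨hk1, hbd⟩ := hQbnd i l k h1 hq2 hl
          rw [← hm0] at hbd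
          have hbd2 : k ≤ (rest.getD m0 []).length :=
            le_trans hbd (spa_out_prefix rest b (j+1) m0).length_le
          have hne0 : rest.getD m0 [] ≠ [] := by
            intro h; rw [h] at hbd2; simp at hbd2; omega
          set ρ0 := (rest.getD m0 []).length with hρ0
          rcases Nat.lt_or_ge (entv T (l,k))
              (((p₁.filter (fun q => decide (q.1 < l))).map (entv T)).getLastD 0) with hV | hV
          · exact Or.inl hV
          · -- entering value ≤ T(l,k) : path p₁ must take the bottom of column l
            have hfil : p₁.filter (fun q => decide (q.1 < l)) =
                (j, col.length) :: r1.filter (fun q => decide (q.1 < l)) := by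
              rw [hp₁, List.filter_cons_of_pos (by simp only [decide_eq_true_eq]; omega)]
            have hVeq : ((p₁.filter (fun q => decide (q.1 < l))).map (entv T)).getLastD 0 =
                ((r1.filter (fun q => decide (q.1 < l))).map (entv T)).getLastD b := by
              rw [hfil]
              simp only [List.map_cons, List.getLastD_cons, hheadv]
            have hkey := spa_take_iff T rest b j m0 hpre hne0
            rw [hlm0] at hkey
            have hmono : entv T (l, k) ≤ entv T (l, ρ0) := by
              have e1 : entv T (l, k) = (T.getD (l-1) []).getD (k-1) 0 := by
                simp [entv, entryAt]
              have e2 : entv T (l, ρ0) = (T.getD (l-1) []).getD (ρ0-1) 0 := by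
                simp [entv, entryAt]
              rw [e1, e2]
              have hρlen : ρ0 ≤ (T.getD (l-1) []).length := by
                have := (hpre m0).length_le
                have harr : j + m0 = l - 1 := by omega
                rwa [harr] at this
              exact colMono (hcols (l-1)) (by omega) (by omega)
            have htake : (l, ρ0) ∈ r1 := by
              rw [← hr1] at hkey
              refine hkey.mpr ?_
              rw [hVeq] at hV
              exact le_trans hV hmono
            by_cases hρk : ρ0 = k
            · -- contradiction : (l,k) would be on both paths
              exfalso
              obtain ⟨-, hlen2, -⟩ := hconsume m0 ⟨ρ0, by rwa [hlm0]⟩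
              omega
            · refine Or.inr ⟨ρ0, by omega, ?_⟩
              rw [hp₁]
              exact List.mem_cons.mpr (Or.inr htake)
      · exfalso; omega

/-! ### Generic list helpers for the assembly -/

lemma getLast?_ne_nil {α : Type*} {L : List α} (h : L ≠ []) : ∃ b, L.getLast? = some b := by
  rcases L.eq_nil_or_concat with rfl | ⟨l, a, rfl⟩
  · exact absurd rfl h
  · exact ⟨a, by simp⟩

lemma getD_default {α : Type*} {L : List α} {nn : ℕ} (d : α) (h : L.length ≤ nn) :
    L.getD nn d = d := by
  rw [List.getD_eq_getElem?_getD, List.getElem?_eq_none h]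
  rfl

lemma getD_eq_getElem' {α : Type*} {L : List α} {nn : ℕ} (d : α) (h : nn < L.length) :
    L.getD nn d = L[nn] := by
  rw [List.getD_eq_getElem?_getD, List.getElem?_eq_getElem h]
  rfl

lemma mem_of_getLast?' {α : Type*} {L : List α} {a : α} (h : L.getLast? = some a) : a ∈ L := by
  rw [List.getLast?_eq_getElem?] at h
  rcases List.getElem?_eq_some_iff.mp h with ⟨hlt, heq⟩
  exact heq ▸ List.getElem_mem hlt

lemma listDom {α : Type*} {f : α → ℕ} {p : List α} (hc : List.Chain' (· ≤ ·) (p.map f))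
    {a z : α} (ha : a ∈ p) (hz : p.getLast? = some z) : f a ≤ f z := by
  have hp := List.isChain_iff_pairwise.mp hc
  rcases List.mem_iff_getElem.mp ha with ⟨t, ht, rfl⟩
  rw [List.getLast?_eq_getElem?] at hz
  rcases List.getElem?_eq_some_iff.mp hz with ⟨hlt, heq⟩
  rcases Nat.lt_or_ge t (p.length - 1) with hlt2 | hge
  · have := List.pairwise_iff_getElem.mp hp t (p.length - 1)
      (by simpa using ht) (by simpa using hlt) hlt2
    rw [List.getElem_map, List.getElem_map] at this
    rw [← heq]
    exact this
  · have : t = p.length - 1 := by omega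
    subst this
    rw [heq]

lemma listDom2 {f : ℕ × ℕ → ℕ} {p : List (ℕ × ℕ)}
    (hcols : List.Pairwise (· < ·) (p.map Prod.fst))
    (hc : List.Chain' (· ≤ ·) (p.map f)) {a z : ℕ × ℕ}
    (ha : a ∈ p) (hz : z ∈ p) (h : a.1 < z.1) : f a ≤ f z := by
  have hp := List.isChain_iff_pairwise.mp hc
  rcases List.mem_iff_getElem.mp ha with ⟨s, hs, rfl⟩
  rcases List.mem_iff_getElem.mp hz with ⟨t, ht, rfl⟩
  rcases Nat.lt_trichotomy s t with hst | hst | hst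
  · have := List.pairwise_iff_getElem.mp hp s t (by simpa using hs) (by simpa using ht) hst
    rw [List.getElem_map, List.getElem_map] at this
    exact this
  · subst hst; omega
  · exfalso
    have := List.pairwise_iff_getElem.mp hcols t s (by simpa using ht) (by simpa using hs) hst
    rw [List.getElem_map, List.getElem_map] at this
    omega

lemma getLastD_map_eq {α : Type*} {L : List α} {f : α → ℕ} {q : α}
    (h : L.getLast? = some q) : (L.map f).getLastD 0 = f q := by
  rw [List.getLastD_eq_getLast?, List.getLast?_map, h]
  rfl

lemma sortedMono {L : List ℕ} (h : List.Pairwise (· ≤ ·) L) {s t : ℕ} (hst : s ≤ t)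
    (ht : t < L.length) : L.getD s 0 ≤ L.getD t 0 := by
  rcases Nat.lt_or_ge s t with hlt | hge
  · have := List.pairwise_iff_getElem.mp h s t (lt_trans hlt ht) ht hlt
    rw [getD_eq_getElem' 0 (lt_trans hlt ht), getD_eq_getElem' 0 ht]
    exact this
  · have : s = t := le_antisymm hst hge
    rw [this]

lemma lowB {L : List ℕ} (h : List.Chain' (· < ·) L) (h1 : ∀ x ∈ L, 1 ≤ x) :
    ∀ t, t < L.length → t + 1 ≤ L.getD t 0 := by
  intro t
  induction t with
  | zero =>
    intro ht
    rw [getD_eq_getElem' 0 ht]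
    exact h1 _ (List.getElem_mem ht)
  | succ t iht =>
    intro ht
    have h2 := iht (by omega)
    have h3 := List.isChain_iff_getElem.mp h t (by omega)
    rw [getD_eq_getElem' 0 ht]
    rw [getD_eq_getElem' 0 (by omega : t < L.length)] at h2
    omega

lemma chain'_getD_rel {α : Type*} {R : α → α → Prop} {L : List α} (h : L.Chain' R) {m : ℕ}
    (hm : m + 1 < L.length) (d : α) : R (L.getD m d) (L.getD (m+1) d) := by
  have := List.isChain_iff_getElem.mp h m (by omega)
  rwa [getD_eq_getElem' d (by omega), getD_eq_getElem' d hm]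

/-! ### Key tableau facts -/

lemma shape_getD (T : Cols) (m : ℕ) : (shape T).getD m 0 = (T.getD m []).length := by
  by_cases hm : m < T.length
  · rw [getD_eq_getElem' 0 (by simpa [shape] using hm), getD_eq_getElem' [] hm]
    simp [shape]
  · rw [getD_default 0 (by simpa [shape] using hm), getD_default [] (by omega)]
    rfl

lemma key_col (n : ℕ) (w : Equiv.Perm (Fin n)) (zeta : List ℕ) (m : ℕ) (hm : m < zeta.length) :
    (keyOf n w zeta).getD m [] = List.insertionSort (· ≤ ·)
      ((List.range (zeta.getD m 0)).filterMap (fun i =>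
        if h : i < n then some (((w ⟨i, h⟩ : Fin n) : ℕ) + 1) else none)) := by
  unfold keyOf
  rw [getD_eq_getElem' [] (by simpa using hm), List.getElem_map, getD_eq_getElem' 0 hm]

lemma key_len (n : ℕ) (w : Equiv.Perm (Fin n)) : ∀ (m : ℕ), m ≤ n →
    ((List.range m).filterMap (fun i =>
      if h : i < n then some (((w ⟨i, h⟩ : Fin n) : ℕ) + 1) else none)).length = m := by
  intro m
  induction m with
  | zero => intro _; simp
  | succ m ihm =>
    intro h
    rw [List.range_succ, List.filterMap_append, List.length_append, ihm (by omega)]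
    simp [show m < n from by omega]

end ScanProof

/-- S(T;j,i) ≤ Y(w;j,i) for all boxes iff every entry of T lies in
the local condition set for its location. -/
theorem sVal_le_key_iff_localB (n : ℕ) (T : Cols) (w : Equiv.Perm (Fin n))
    (hT : IsSSYT T) (he : EntriesIn n T) :
    ((∀ j i, 1 ≤ j → j ≤ T.length → 1 ≤ i → i ≤ (T.getD (j-1) []).length →
        sVal T j i ≤ entryAt (keyOf n w (shape T)) j i)
     ↔ (∀ l k, 1 ≤ l → l ≤ T.length → 1 ≤ k → k ≤ (T.getD (l-1) []).length →
        entryAt T l k ∈ localB T (keyOf n w (shape T)) l k)) := by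
  obtain ⟨hsh, hcolT, hrowT⟩ := hT
  set Y := keyOf n w (shape T) with hY
  -- basic facts about T
  have hcols : ∀ m, List.Chain' (· < ·) (T.getD m []) := by
    intro m
    by_cases hm : m < T.length
    · exact hcolT _ (by rw [getD_eq_getElem' [] hm]; exact List.getElem_mem hm)
    · rw [getD_default [] (by omega)]; exact List.isChain_nil
  have hrow : ∀ m k, k < (T.getD (m+1) []).length →
      (T.getD m []).getD k 0 ≤ (T.getD (m+1) []).getD k 0 := by
    intro m k hk
    by_cases hm : m + 1 < T.length
    · exact chain'_getD_rel hrowT hm [] k hk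
    · rw [getD_default [] (by omega)] at hk; simp at hk
  have hshape : ∀ m, (T.getD (m+1) []).length ≤ (T.getD m []).length := by
    intro m
    by_cases hm : m + 1 < T.length
    · have := chain'_getD_rel hsh (by simpa [shape] using hm) 0
      rwa [shape_getD, shape_getD] at this
    · rw [getD_default [] (by omega)]; simp
  have hent : ∀ m, m < T.length → ∀ x ∈ T.getD m [], 1 ≤ x ∧ x ≤ n := by
    intro m hm
    exact he _ (by rw [getD_eq_getElem' [] hm]; exact List.getElem_mem hm)
  have hzn : ∀ m, m < T.length → (T.getD m []).length ≤ n := by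
    intro m hm
    by_cases h0 : (T.getD m []).length = 0
    · omega
    · have hlt : (T.getD m []).length - 1 < (T.getD m []).length := by omega
      have h1 := lowB (hcols m) (fun x hx => (hent m hm x hx).1) _ hlt
      have h2 : (T.getD m []).getD ((T.getD m []).length - 1) 0 ≤ n := by
        refine (hent m hm _ ?_).2
        rw [getD_eq_getElem' 0 hlt]; exact List.getElem_mem hlt
      omega
  -- key column facts
  have hYcol : ∀ jj, 1 ≤ jj → jj ≤ T.length →
      List.Pairwise (· ≤ ·) (Y.getD (jj-1) []) ∧
        (Y.getD (jj-1) []).length = (T.getD (jj-1) []).length := by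
    intro jj h1 h2
    have hm : jj - 1 < (shape T).length := by
      simp only [shape, List.length_map]; omega
    rw [hY, key_col n w (shape T) (jj-1) hm, shape_getD]
    exact ⟨List.pairwise_insertionSort _ _,
      by rw [List.length_insertionSort]; exact key_len n w _ (hzn (jj-1) (by omega))⟩
  -- the scanning-path invariants for each column
  have hGj : ∀ jj, 1 ≤ jj → jj ≤ T.length →
      GoodOut T jj (T.getD (jj-1) []).length (T.drop jj) (pathsFrom T jj) := by
    intro jj h1 h2
    have hpre : PrefSt T jj (T.drop jj) := fun m => by
      rw [getD_drop']
    have hdes : DesSt (T.getD (jj-1) [] :: T.drop jj) := by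
      intro m
      cases m with
      | zero =>
        simp only [List.getD_cons_succ, List.getD_cons_zero]
        rw [getD_drop']
        have h3 := hshape (jj-1)
        have hJ : jj - 1 + 1 = jj := by omega
        rw [hJ] at h3
        simpa using h3
      | succ m =>
        simp only [List.getD_cons_succ]
        rw [getD_drop', getD_drop']
        have h3 := hshape (jj + m)
        have hJ : jj + m + 1 = jj + (m + 1) := by omega
        rwa [hJ] at h3
    exact good_main T jj h1 hrow hcols _ _ _ (List.prefix_refl _) rfl hpre hdes
  -- membership bounds
  have hmemb : ∀ jj i l k, 1 ≤ jj → jj ≤ T.length → 1 ≤ i →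
      (l,k) ∈ (pathsFrom T jj).getD (i-1) [] →
      jj ≤ l ∧ l ≤ T.length ∧ 1 ≤ k ∧ k ≤ (T.getD (l-1) []).length ∧
        (l = jj → k = i) ∧ i ≤ (T.getD (jj-1) []).length := by
    intro jj i l k h1 h2 hi hm
    have hG := hGj jj h1 h2
    have hiz : i ≤ (T.getD (jj-1) []).length := by
      by_contra hcon
      rw [getD_default [] (by rw [hG.len]; omega)] at hm
      simp at hm
    obtain ⟨hk1, hjl, hcoljj, hbd⟩ := hG.bval i (l,k) hi hm
    by_cases hlj : l = jj
    · subst hlj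
      refine ⟨le_refl l, h2, hk1, ?_, fun _ => hcoljj rfl, hiz⟩
      have hki : k = i := hcoljj rfl
      omega
    · have hlt : jj < l := lt_of_le_of_ne hjl (Ne.symm hlj)
      have hb2 := hbd hlt
      rw [getD_drop'] at hb2
      have harr : jj + (l - jj - 1) = l - 1 := by omega
      rw [harr] at hb2
      have hlT : l ≤ T.length := by
        by_contra hcon
        rw [getD_default [] (by omega)] at hb2
        simp at hb2; omega
      exact ⟨le_of_lt hlt, hlT, hk1, hb2, fun h => absurd h hlj, hiz⟩
  -- findIdx characterization
  have hfindIdx : ∀ jj (q : ℕ × ℕ) t, 1 ≤ jj → jj ≤ T.length → 1 ≤ t →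
      q ∈ (pathsFrom T jj).getD (t-1) [] →
      (pathsFrom T jj).findIdx (fun p => decide (q ∈ p)) = t - 1 := by
    intro jj q t h1 h2 ht hmem
    have hG := hGj jj h1 h2
    have htz : t ≤ (T.getD (jj-1) []).length := by
      by_contra hcon
      rw [getD_default [] (by rw [hG.len]; omega)] at hmem
      simp at hmem
    have hlt : t - 1 < (pathsFrom T jj).length := by rw [hG.len]; omega
    refine (List.findIdx_eq hlt).mpr ⟨?_, ?_⟩
    · rw [← getD_eq_getElem' [] hlt]
      simpa using hmem
    · intro s hs
      simp only [decide_eq_false_iff_not]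
      rw [← getD_eq_getElem' [] (by omega : s < (pathsFrom T jj).length)]
      intro hmem2
      have := hG.uniq (s+1) t q (by omega) ht (by simpa using hmem2) hmem
      omega
  -- sVal characterization
  have hsval : ∀ jj i q, ((pathsFrom T jj).getD (i-1) []).getLast? = some q →
      sVal T jj i = entv T q := by
    intro jj i q hq
    simp only [sVal, scanPath, hq]
    rfl
  -- the intermediate statement C
  have hC1 : (∀ j i, 1 ≤ j → j ≤ T.length → 1 ≤ i → i ≤ (T.getD (j-1) []).length →
      sVal T j i ≤ entryAt Y j i) →
      ∀ jj i l k, 1 ≤ jj → jj ≤ T.length → 1 ≤ i →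
        (l,k) ∈ (pathsFrom T jj).getD (i-1) [] → entryAt T l k ≤ entryAt Y jj i := by
    intro hS jj i l k h1 h2 hi hm
    have hG := hGj jj h1 h2
    have hiz := (hmemb jj i l k h1 h2 hi hm).2.2.2.2.2
    obtain ⟨q, hq⟩ := getLast?_ne_nil (List.ne_nil_of_mem hm)
    have hdom : entv T (l,k) ≤ entv T q := listDom (hG.vals i hi) hm hq
    have hfin := hS jj i h1 h2 hi hiz
    rw [hsval jj i q hq] at hfin
    exact le_trans hdom hfin
  have hC2 : (∀ jj i l k, 1 ≤ jj → jj ≤ T.length → 1 ≤ i →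
      (l,k) ∈ (pathsFrom T jj).getD (i-1) [] → entryAt T l k ≤ entryAt Y jj i) →
      ∀ j i, 1 ≤ j → j ≤ T.length → 1 ≤ i → i ≤ (T.getD (j-1) []).length →
        sVal T j i ≤ entryAt Y j i := by
    intro hC j i h1 h2 hi hiz
    have hG := hGj j h1 h2
    obtain ⟨p, hp, -⟩ := hG.head i hi hiz
    have hne : (pathsFrom T j).getD (i-1) [] ≠ [] := by rw [hp]; simp
    obtain ⟨q, hq⟩ := getLast?_ne_nil hne
    have hmem : q ∈ (pathsFrom T j).getD (i-1) [] := mem_of_getLast?' hq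
    rw [hsval j i q hq]
    exact hC j i q.1 q.2 h1 h2 hi hmem
  have hC3 : (∀ jj i l k, 1 ≤ jj → jj ≤ T.length → 1 ≤ i →
      (l,k) ∈ (pathsFrom T jj).getD (i-1) [] → entryAt T l k ≤ entryAt Y jj i) →
      ∀ l k, 1 ≤ l → l ≤ T.length → 1 ≤ k → k ≤ (T.getD (l-1) []).length →
        entryAt T l k ∈ localB T Y l k := by
    intro hC l k hl1 hl2 hk1 hk2
    intro j hj1 hjl
    by_cases hjl2 : j = l
    · subst hjl2
      have hG := hGj j hj1 hl2
      obtain ⟨p, hp, -⟩ := hG.head k hk1 hk2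
      refine ⟨k, by rw [aIdx, if_pos rfl], by rw [bIdx, if_pos rfl], ?_, ?_⟩
      · rw [eVal, if_pos rfl]
        have := lowB (hcols (j-1)) (fun x hx => (hent (j-1) (by omega) x hx).1) (k-1)
          (by omega)
        have harr : k - 1 + 1 = k := by omega
        rw [harr] at this
        exact this
      · exact hC j k j k hj1 hl2 hk1 (by rw [hp]; exact List.mem_cons_self)
    · have hjl3 : j < l := lt_of_le_of_ne hjl hjl2
      have hG := hGj j hj1 (by omega)
      have harr : j + (l - j - 1) = l - 1 := by omega
      obtain ⟨is, his1, his2, hism⟩ := hG.exis l k hjl3 hk1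
        (by rw [getD_drop', harr]; exact hk2)
      refine ⟨is, ?_, ?_, ?_, hC j is l k hj1 (by omega) his1 hism⟩
      · -- aIdx ≤ is
        rw [aIdx, if_neg hjl2]
        have hzl1 : k ≤ (T.getD (l-1-1) []).length := by
          have := hshape (l-1-1)
          have harr2 : l - 1 - 1 + 1 = l - 1 := by omega
          rw [harr2] at this
          omega
        by_cases hlj1 : l - 1 = j
        · -- the box (j,k) lies on path k
          obtain ⟨p, hp, -⟩ := hG.head k hk1 (by rw [← hlj1]; exact hzl1)
          have hmemk : ((l-1), k) ∈ (pathsFrom T j).getD (k-1) [] := by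
            rw [hp, hlj1]; exact List.mem_cons_self
          rw [hfindIdx j ((l-1), k) k hj1 (by omega) hk1 hmemk]
          have := hG.rowle is l k his1 hism
          omega
        · have hja : j < l - 1 := by omega
          have harr3 : j + (l - 1 - j - 1) = l - 1 - 1 := by omega
          obtain ⟨ia, hia1, hia2, hiam⟩ := hG.exis (l-1) k hja hk1
            (by rw [getD_drop', harr3]; exact hzl1)
          rw [hfindIdx j ((l-1), k) ia hj1 (by omega) hia1 hiam]
          have := hG.aword ia is l k hia1 his1 (by omega) hiam hism
          omega
      · -- is + 1 ≤ bIdx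
        rw [bIdx, if_neg hjl2]
        by_cases hkz : k = (T.getD (l-1) []).length
        · rw [if_pos hkz]; omega
        · rw [if_neg hkz]
          obtain ⟨ib, hib1, hib2, hibm⟩ := hG.exis l (k+1) hjl3 (by omega)
            (by rw [getD_drop', harr]; omega)
          rw [hfindIdx j (l, k+1) ib hj1 (by omega) hib1 hibm]
          have := hG.ord is ib l k (k+1) his1 hib1 hism hibm (by omega)
          omega
      · -- eVal ≤ entry
        rw [eVal, if_neg hjl2]
        cases hfl : ((scanPath T j is).filter (fun q => decide (q.1 < l))).getLast? with
        | none => simp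
        | some q0 =>
          have hq0 : q0 ∈ (scanPath T j is).filter (fun q => decide (q.1 < l)) :=
            mem_of_getLast?' hfl
          obtain ⟨hq0m, hq0l⟩ := List.mem_filter.mp hq0
          simp only [decide_eq_true_eq] at hq0l
          have : entv T q0 ≤ entv T (l, k) :=
            listDom2 (hG.cols is his1) (hG.vals is his1) hq0m hism hq0l
          simpa [entv, entryAt] using this
  have hC4 : (∀ l k, 1 ≤ l → l ≤ T.length → 1 ≤ k → k ≤ (T.getD (l-1) []).length →
      entryAt T l k ∈ localB T Y l k) →
      ∀ jj i l k, 1 ≤ jj → jj ≤ T.length → 1 ≤ i →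
        (l,k) ∈ (pathsFrom T jj).getD (i-1) [] → entryAt T l k ≤ entryAt Y jj i := by
    intro hR jj i l k h1 h2 hi hm
    obtain ⟨hjl, hlT, hk1, hk2, hlj_eq, hiz⟩ := hmemb jj i l k h1 h2 hi hm
    obtain ⟨i', ha, hb, he1, he2⟩ := hR l k (by omega) hlT hk1 hk2 jj h1 hjl
    by_cases hjl2 : jj = l
    · have hki : k = i := hlj_eq hjl2.symm
      rw [aIdx, if_pos hjl2] at ha
      rw [bIdx, if_pos hjl2] at hb
      have hii' : i = i' := by omega
      rw [hii']
      exact he2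
    · have hjl3 : jj < l := lt_of_le_of_ne hjl hjl2
      have hG := hGj jj h1 h2
      have harr : jj + (l - jj - 1) = l - 1 := by omega
      have hi'1 : 1 ≤ i' := by
        rw [aIdx, if_neg hjl2] at ha; omega
      rcases le_or_gt i' i with hle | hgt
      · have hs := hYcol jj h1 h2
        refine le_trans he2 ?_
        show (Y.getD (jj-1) []).getD (i'-1) 0 ≤ (Y.getD (jj-1) []).getD (i-1) 0
        exact sortedMono hs.1 (by omega) (by rw [hs.2]; omega)
      · exfalso
        have hi'z : i' ≤ (T.getD (jj-1) []).length := by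
          rw [bIdx, if_neg hjl2] at hb
          by_cases hkz : k = (T.getD (l-1) []).length
          · rw [if_pos hkz] at hb; omega
          · rw [if_neg hkz] at hb
            have hfle := List.findIdx_le_length (p := fun p => decide ((l, k+1) ∈ p))
              (xs := pathsFrom T jj)
            rw [hG.len] at hfle
            omega
        have hD := hG.dcl i i' l k hi hgt hi'z hjl3 hm
        rcases hD with hD | ⟨ρ, hρ1, hρ2⟩
        · obtain ⟨p', hp', -⟩ := hG.head i' hi'1 hi'z
          have hfilne : (jj, i') ∈ ((pathsFrom T jj).getD (i'-1) []).filter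
              (fun q => decide (q.1 < l)) := by
            rw [hp']
            exact List.mem_filter.mpr ⟨List.mem_cons_self,
              by simp only [decide_eq_true_eq]; omega⟩
          obtain ⟨q0, hq0⟩ := getLast?_ne_nil (List.ne_nil_of_mem hfilne)
          have heval : eVal T l k jj i' = entv T q0 := by
            rw [eVal, if_neg hjl2, scanPath, hq0]
            rfl
          have hgl := getLastD_map_eq (f := entv T) hq0
          rw [hgl] at hD
          rw [heval] at he1
          have : entryAt T l k = entv T (l,k) := rfl
          omega
        · have hbnd := hmemb jj i' l ρ h1 h2 (by omega) hρ2
          by_cases hkz : k = (T.getD (l-1) []).length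
          · have : ρ ≤ k := by rw [hkz]; exact hbnd.2.2.2.1
            omega
          · rw [bIdx, if_neg hjl2, if_neg hkz] at hb
            obtain ⟨ib, hib1, hib2, hibm⟩ := hG.exis l (k+1) hjl3 (by omega)
              (by rw [getD_drop', harr]; omega)
            rw [hfindIdx jj (l, k+1) ib h1 h2 hib1 hibm] at hb
            rcases Nat.lt_trichotomy ρ (k+1) with hh | hh | hh
            · omega
            · have := hG.uniq i' ib (l, k+1) (by omega) hib1 (hh ▸ hρ2) hibm
              omega
            · have := hG.ord ib i' l (k+1) ρ hib1 (by omega) hibm hρ2 hh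
              omega
  constructor
  · intro hS l k hl1 hl2 hk1 hk2
    exact hC3 (hC1 hS) l k hl1 hl2 hk1 hk2
  · intro hR j i h1 h2 hi hiz
    exact hC2 (hC4 hR) j i h1 h2 hi hiz

end Demazure
end

section
/- Let λ = (d,...,d, d−1, ..., 2, 1) be a partial staircase n-partition for some 1 ≤ d ≤ n, and let w ∈ S_n. If w is 312-avoiding, then the key Y_λ(w) has no 312-containing gaps. -/
namespace Demazure

/-- A key K has a 312-containing gap: some column j has a gap (two consecutive
entries differing by more than one) weakly below an entry of column j that does
not appear in column j+1. -/
def Has312Gap (K : Cols) : Prop :=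
  ∃ j, j + 1 < K.length ∧
    ∃ x ∈ K.getD j [], x ∉ K.getD (j+1) [] ∧
      ∃ p, p + 1 < (K.getD j []).length ∧
        x ≤ (K.getD j []).getD p 0 ∧
        (K.getD j []).getD p 0 + 1 < (K.getD j []).getD (p+1) 0

/-- The unsorted list of the first `k` values of `w` (shifted by 1). -/
def auxL (n : ℕ) (w : Equiv.Perm (Fin n)) (k : ℕ) : List ℕ :=
  (List.range k).filterMap (fun i =>
    if h : i < n then some (((w ⟨i, h⟩ : Fin n) : ℕ) + 1) else none)

lemma mem_auxL {n : ℕ} {w : Equiv.Perm (Fin n)} {k x : ℕ} (hk : k ≤ n) :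
    x ∈ auxL n w k ↔ ∃ i : ℕ, ∃ h : i < n, i < k ∧ x = (w ⟨i, h⟩ : ℕ) + 1 := by
  simp only [auxL, List.mem_filterMap, List.mem_range]
  constructor
  · rintro ⟨i, hi, hsome⟩
    have hin : i < n := lt_of_lt_of_le hi hk
    rw [dif_pos hin] at hsome
    exact ⟨i, hin, hi, (Option.some_inj.mp hsome).symm⟩
  · rintro ⟨i, hin, hik, rfl⟩
    exact ⟨i, hik, by rw [dif_pos hin]⟩

lemma auxL_length {n : ℕ} (w : Equiv.Perm (Fin n)) {k : ℕ} (hk : k ≤ n) :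
    (auxL n w k).length = k := by
  induction k with
  | zero => simp [auxL]
  | succ m ih =>
    have hm : m < n := hk
    rw [auxL, List.range_succ, List.filterMap_append]
    have : (auxL n w m).length = m := ih (le_of_lt hm)
    rw [auxL] at this
    simp [this, dif_pos hm]

lemma keyOf_staircase_getD {n d : ℕ} (w : Equiv.Perm (Fin n)) {j : ℕ} (hj : j < d) :
    (keyOf n w (staircaseCols n d)).getD j [] =
      List.insertionSort (· ≤ ·) (auxL n w (n - j)) := by
  have hlen : (keyOf n w (staircaseCols n d)).length = d := by
    simp [keyOf, staircaseCols]
  rw [List.getD_eq_getElem _ _ (by omega : j < (keyOf n w (staircaseCols n d)).length)]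
  simp [keyOf, staircaseCols, auxL]

lemma sorted_getElem_le {l : List ℕ} (hs : l.Pairwise (· ≤ ·)) {i j : ℕ}
    (hij : i ≤ j) (hj : j < l.length) : l[i]'(lt_of_le_of_lt hij hj) ≤ l[j] := by
  rcases eq_or_lt_of_le hij with rfl | h
  · exact le_refl _
  · exact List.Pairwise.rel_get_of_lt hs (by simpa using h)

/-- for the partial staircase λ = (d,...,d,d-1,...,2,1) and a
312-avoiding w, the key Y_λ(w) has no 312-containing gaps. -/
theorem no312Gap_of_312Avoiding (n d : ℕ) (hd1 : 1 ≤ d) (hdn : d ≤ n)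
    (w : Equiv.Perm (Fin n)) (hw : Is312Avoiding w) :
    ¬ Has312Gap (keyOf n w (staircaseCols n d)) := by
  rintro ⟨j, hj, x, hxmem, hxnot, p, hp, hxp, hgap⟩
  have hlen : (keyOf n w (staircaseCols n d)).length = d := by
    simp [keyOf, staircaseCols]
  rw [hlen] at hj
  -- k is the length of column j
  set k : ℕ := n - j with hk
  have hk2 : 2 ≤ k := by omega
  have hkn : k ≤ n := by omega
  have hcol : (keyOf n w (staircaseCols n d)).getD j [] =
      List.insertionSort (· ≤ ·) (auxL n w k) := keyOf_staircase_getD w (by omega)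
  have hcol' : (keyOf n w (staircaseCols n d)).getD (j+1) [] =
      List.insertionSort (· ≤ ·) (auxL n w (k-1)) := by
    have := keyOf_staircase_getD (d := d) w (j := j+1) (by omega)
    rwa [show n - (j+1) = k - 1 by omega] at this
  set col : List ℕ := List.insertionSort (· ≤ ·) (auxL n w k) with hcoldef
  rw [hcol] at hxmem hp hxp hgap
  rw [hcol'] at hxnot
  have hmemcol : ∀ y : ℕ, y ∈ col ↔ ∃ i : ℕ, ∃ h : i < n, i < k ∧ y = (w ⟨i, h⟩ : ℕ) + 1 :=
    fun y => ((List.perm_insertionSort (· ≤ ·) (auxL n w k)).mem_iff).trans (mem_auxL hkn)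
  have hcollen : col.length = k := by
    rw [(List.perm_insertionSort (· ≤ ·) (auxL n w k)).length_eq, auxL_length w hkn]
  have hsorted : col.Pairwise (· ≤ ·) := List.pairwise_insertionSort (· ≤ ·) (auxL n w k)
  -- identify x as w(k-1)+1
  obtain ⟨ix, hixn, hixk, hxeq⟩ := (hmemcol x).mp hxmem
  have hixk1 : ix = k - 1 := by
    by_contra hne
    apply hxnot
    rw [(List.perm_insertionSort (· ≤ ·) (auxL n w (k-1))).mem_iff,
      mem_auxL (by omega : k - 1 ≤ n)]
    exact ⟨ix, hixn, by omega, hxeq⟩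
  -- the entries s_p and s_{p+1}
  have hplt : p < col.length := by omega
  have hp1lt : p + 1 < col.length := hp
  rw [List.getD_eq_getElem _ _ hplt] at hxp hgap
  rw [List.getD_eq_getElem _ _ hp1lt] at hgap
  obtain ⟨a, han, hak, haeq⟩ := (hmemcol col[p+1]).mp (List.getElem_mem hp1lt)
  -- the missing value v = col[p] + 1
  have hvnot : col[p] + 1 ∉ col := by
    intro hvin
    obtain ⟨q, hq, hq2⟩ := List.mem_iff_getElem.mp hvin
    rcases le_or_gt q p with h | h
    · have := sorted_getElem_le hsorted h hplt
      omega
    · have := sorted_getElem_le hsorted (by omega : p + 1 ≤ q) hq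
      omega
  have hvlt : col[p] + 1 ≤ n := by
    have : (w ⟨a, han⟩ : ℕ) < n := (w ⟨a, han⟩).isLt
    omega
  set c : Fin n := w.symm ⟨col[p], by omega⟩ with hc
  have hwc : (w c : ℕ) = col[p] := by rw [hc, Equiv.apply_symm_apply]
  have hck : k ≤ (c : ℕ) := by
    by_contra hlt
    apply hvnot
    rw [hmemcol]
    exact ⟨(c : ℕ), c.isLt, by omega, by simp [hwc]⟩
  -- a < k - 1
  have hbn : k - 1 < n := by omega
  have hwb : (w ⟨k-1, hbn⟩ : ℕ) + 1 = x := by subst hixk1; exact hxeq.symm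
  have hak1 : a < k - 1 := by
    rcases lt_or_eq_of_le (by omega : a ≤ k - 1) with h | h
    · exact h
    · exfalso
      have heq2 : (⟨a, han⟩ : Fin n) = ⟨k-1, hbn⟩ := by simp [h]
      rw [heq2, hwb] at haeq
      have hpp1 : col[p] ≤ col[p+1] := sorted_getElem_le hsorted (by omega) hp1lt
      omega
  have h1 : (⟨a, han⟩ : Fin n) < ⟨k-1, hbn⟩ := Fin.mk_lt_mk.mpr (by omega)
  have h2 : (⟨k-1, hbn⟩ : Fin n) < c := by rw [Fin.lt_def]; exact (by omega : k - 1 < (c : ℕ))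
  have h3 : w ⟨k-1, hbn⟩ < w c := by rw [Fin.lt_def, hwc]; omega
  have h4 : w c < w ⟨a, han⟩ := by rw [Fin.lt_def, hwc]; omega
  exact hw ⟨⟨a, han⟩, ⟨k-1, hbn⟩, c, h1, h2, h3, h4⟩

end Demazure
end

section
/- Let T be a semistandard tableau, let T^{(j)} be obtained by successive length swaps moving the first column rightward, and let b_h^{(j)} denote the bottom entry of column h of T^{(j)}. For 1 ≤ j ≤ k−1: if b_{j+1}^{(j)} ≥ b_j^{(j)} then b_{j+1}^{(j+1)} = b_{j+1}^{(j)}, and otherwise b_{j+1}^{(j+1)} = b_j^{(j)}. -/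
namespace Demazure

/-- One reverse jeu de taquin slide on a pair of adjacent offset columns
(oL, X) and (oR, Y), the hole starting at the outside corner directly below Y.
The hole moves up pulling entries of Y down until the left neighbour is strictly
larger than the upper one, in which case the left entry slides right and the left
column's entries above it slide down. -/
def revSlide (oL : ℕ) (X : List ℕ) (oR : ℕ) (Y : List ℕ) :
    ℕ × List ℕ × ℕ × List ℕ :=
  match (List.range (Y.length + 1)).reverse.find? (fun t =>
      let r := oR + t
      match colEntry? (oL, X) r, (if t = 0 then none else colEntry? (oR, Y) (r-1)) with
      | some _, none => true
      | some xv, some yv => decide (yv < xv)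
      | none, _ => false) with
  | some t =>
      let r := oR + t
      (oL + 1, X.take (r - oL) ++ X.drop (r - oL + 1),
       oR, Y.take t ++ [X.getD (r - oL) 0] ++ Y.drop t)
  | none => (oL, X, oR + 1, Y)

/-- Iterate x_j = l(U_j) − l(U_{j+1}) reverse slides on the pair of columns. -/
def lengthSwapPair : ℕ → ℕ × List ℕ × ℕ × List ℕ → ℕ × List ℕ × ℕ × List ℕ
  | 0, s => s
  | k+1, (oL, X, oR, Y) => lengthSwapPair k (revSlide oL X oR Y)

/-- The number of boxes of column p attached to boxes of column q. -/
def attached (p q : ℕ × List ℕ) : ℕ :=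
  min (p.1 + p.2.length) (q.1 + q.2.length) - max p.1 q.1

/-- The j-th length swap (1-indexed j): shift columns 1, ..., j−1 down by d_j
(the number of boxes of U_{j-1} attached to U_j) and perform
l(U_j) − l(U_{j+1}) reverse slides on the outside corner of U_j ⊕ U_{j+1}. -/
def lengthSwapAt (U : SkewCols) (j : ℕ) : SkewCols :=
  match U[j-1]?, U[j]? with
  | some p, some q =>
    let d : ℕ :=
      if 2 ≤ j then
        match U[j-2]?, U[j-1]? with
        | some p', some q' => attached p' q'
        | _, _ => 0
      else 0
    let res := lengthSwapPair (p.2.length - q.2.length) (p.1, p.2, q.1, q.2)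
    ((U.take (j-1)).map (fun r => (r.1 + d, r.2)))
      ++ [(res.1, res.2.1), (res.2.2.1, res.2.2.2)] ++ U.drop (j+1)
  | _, _ => U

/-- `Tstage T j` is T^{(j+1)}: T^{(1)} is T itself (offsets 0), and T^{(j+1)} is
obtained from T^{(j)} by the j-th length swap. -/
def Tstage (T : Cols) : ℕ → SkewCols
  | 0 => T.map (fun c => (0, c))
  | j+1 => lengthSwapAt (Tstage T j) (j+1)

/-- b_h^{(j)}: bottom entry of column h of T^{(j)} (1-indexed h, j). -/
def bstage (T : Cols) (j h : ℕ) : ℕ :=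
  ((Tstage T (j-1)).getD (h-1) (0, [])).2.getLastD 0

/-! ### Auxiliary lemmas for Statement 17 -/

section Proof17

private lemma getD_def' (l : List ℕ) (n : ℕ) : l.getD n 0 = (l[n]?).getD 0 :=
  List.getD_eq_getElem?_getD

private lemma get?_of_lt' {l : List ℕ} {n : ℕ} (h : n < l.length) :
    l[n]? = some (l.getD n 0) := by
  rw [getD_def', List.getElem?_eq_getElem h]; rfl

private lemma getD_of_le' {l : List ℕ} {n : ℕ} (h : l.length ≤ n) : l.getD n 0 = 0 := by
  rw [getD_def', List.getElem?_eq_none h]; rfl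

private lemma chain'_lt_getD {l : List ℕ} (h : l.Chain' (· < ·)) {a b : ℕ}
    (hab : a < b) (hb : b < l.length) : l.getD a 0 < l.getD b 0 := by
  have hp := List.isChain_iff_pairwise.1 h
  have h2 := List.pairwise_iff_get.1 hp ⟨a, by omega⟩ ⟨b, hb⟩ (by simpa using hab)
  rw [List.getD_eq_getElem _ _ (by omega : a < l.length),
    List.getD_eq_getElem _ _ hb]
  exact h2

private lemma chain'_le_getD {l : List ℕ} (h : l.Chain' (· < ·)) {a b : ℕ}
    (hab : a ≤ b) (hb : b < l.length) : l.getD a 0 ≤ l.getD b 0 := by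
  rcases Nat.eq_or_lt_of_le hab with rfl | h'
  · exact le_refl _
  · exact (chain'_lt_getD h h' hb).le

private lemma chain'_lt_of_getD {l : List ℕ}
    (h : ∀ a, a + 1 < l.length → l.getD a 0 < l.getD (a+1) 0) : l.Chain' (· < ·) := by
  refine List.isChain_iff_getElem.2 ?_
  intro i hi
  have := h i (by omega)
  rwa [List.getD_eq_getElem _ _ (by omega : i < l.length),
    List.getD_eq_getElem _ _ (by omega : i + 1 < l.length)] at this

private lemma getD_delete {l : List ℕ} {i : ℕ} (hi : i < l.length) (a : ℕ) :
    (l.take i ++ l.drop (i+1)).getD a 0 = if a < i then l.getD a 0 else l.getD (a+1) 0 := by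
  have hti : (l.take i).length = i := by simp; omega
  by_cases h : a < i
  · rw [if_pos h, getD_def', List.getElem?_append_left (by omega), List.getElem?_take_of_lt h, ← getD_def']
  · rw [if_neg h, getD_def', List.getElem?_append_right (by omega), hti, List.getElem?_drop]
    have : i + 1 + (a - i) = a + 1 := by omega
    rw [this, ← getD_def']

private lemma getD_insert {l : List ℕ} {t : ℕ} (ht : t ≤ l.length) (x a : ℕ) :
    (l.take t ++ [x] ++ l.drop t).getD a 0 =
      if a < t then l.getD a 0 else if a = t then x else l.getD (a-1) 0 := by
  have htl : (l.take t).length = t := by simp; omega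
  rw [List.append_assoc, List.singleton_append]
  by_cases h1 : a < t
  · rw [if_pos h1, getD_def', List.getElem?_append_left (by omega), List.getElem?_take_of_lt h1, ← getD_def']
  · rw [if_neg h1, getD_def', List.getElem?_append_right (by omega), htl]
    by_cases h2 : a = t
    · subst h2; rw [Nat.sub_self, if_pos rfl]; rfl
    · rw [if_neg h2]
      have h3 : a - t = (a - t - 1) + 1 := by omega
      rw [h3, List.getElem?_cons_succ, List.getElem?_drop]
      have h4 : t + (a - t - 1) = a - 1 := by omega
      rw [h4, ← getD_def']

private lemma getLastD_eq_getD (l : List ℕ) : l.getLastD 0 = l.getD (l.length - 1) 0 := by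
  cases l with
  | nil => rfl
  | cons a as =>
    rw [List.getLastD_eq_getLast?, List.getLast?_eq_getElem?, getD_def']

private lemma rev_range_find?_some {p : ℕ → Bool} : ∀ {n t : ℕ},
    (List.range n).reverse.find? p = some t →
    t < n ∧ p t = true ∧ ∀ s, t < s → s < n → p s = false := by
  intro n
  induction n with
  | zero => intro t h; simp at h
  | succ m ih =>
    intro t h
    rw [List.range_succ, List.reverse_append, List.reverse_singleton,
      List.singleton_append, List.find?_cons] at h
    cases hpm : p m with
    | true =>
      rw [hpm] at h
      simp only [Option.some.injEq] at h
      subst h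
      exact ⟨by omega, hpm, fun s h1 h2 => by omega⟩
    | false =>
      rw [hpm] at h
      obtain ⟨h1, h2, h3⟩ := ih h
      refine ⟨by omega, h2, fun s hs1 hs2 => ?_⟩
      by_cases hsm : s = m
      · subst hsm; exact hpm
      · exact h3 s hs1 (by omega)

private lemma rev_range_find?_none {p : ℕ → Bool} {n : ℕ}
    (h : (List.range n).reverse.find? p = none) : ∀ s, s < n → p s = false := by
  intro s hs
  have := List.find?_eq_none.1 h s (by simp [hs])
  simpa using this

private lemma colEntry?_some {o r : ℕ} {l : List ℕ} (h1 : o ≤ r) (h2 : r - o < l.length) :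
    colEntry? (o, l) r = some (l.getD (r - o) 0) := by
  simp only [colEntry?, if_pos h1]
  exact get?_of_lt' h2

end Proof17

section Proof17b

private lemma revSlide_spec {oL : ℕ} {X Y : List ℕ} {t : ℕ}
    (htY : t ≤ Y.length) (hoLt : oL ≤ t) (hiX : t - oL < X.length)
    (ht0 : t = 0 ∨ (1 ≤ t ∧ Y.getD (t-1) 0 < X.getD (t - oL) 0))
    (hmax : ∀ s, t < s → s ≤ Y.length →
      oL ≤ s ∧ s - oL < X.length ∧ X.getD (s - oL) 0 ≤ Y.getD (s-1) 0) :
    revSlide oL X 0 Y = (oL + 1, X.take (t - oL) ++ X.drop (t - oL + 1), 0,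
      Y.take t ++ [X.getD (t - oL) 0] ++ Y.drop t) := by
  unfold revSlide
  split
  case _ t' heq =>
    obtain ⟨ht'n, hpt', hmax'⟩ := rev_range_find?_some heq
    have htt : t' = t := by
      rcases lt_trichotomy t' t with hc | hc | hc
      · exfalso
        have hft := hmax' t hc (by omega)
        simp only [Nat.zero_add] at hft
        rw [colEntry?_some hoLt hiX] at hft
        rcases ht0 with rfl | ⟨ht1, hlt⟩
        · rw [if_pos rfl] at hft
          simp at hft
        · rw [if_neg (by omega : ¬ t = 0),
            colEntry?_some (Nat.zero_le _) (by omega : t - 1 - 0 < Y.length)] at hft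
          simp only [Nat.sub_zero] at hft
          simp only [decide_eq_false_iff_not, not_lt] at hft
          omega
      · exact hc
      · exfalso
        obtain ⟨ho, hx, hcmp⟩ := hmax t' hc (by omega)
        simp only [Nat.zero_add] at hpt'
        rw [colEntry?_some ho hx] at hpt'
        rw [if_neg (by omega : ¬ t' = 0),
          colEntry?_some (Nat.zero_le _) (by omega : t' - 1 - 0 < Y.length)] at hpt'
        simp only [Nat.sub_zero] at hpt'
        simp only [decide_eq_true_eq] at hpt'
        omega
    subst htt
    simp only [Nat.zero_add]
  case _ heq =>
    exfalso
    have hft := rev_range_find?_none heq t (by omega)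
    simp only [Nat.zero_add] at hft
    rw [colEntry?_some hoLt hiX] at hft
    rcases ht0 with rfl | ⟨ht1, hlt⟩
    · rw [if_pos rfl] at hft
      simp at hft
    · rw [if_neg (by omega : ¬ t = 0),
        colEntry?_some (Nat.zero_le _) (by omega : t - 1 - 0 < Y.length)] at hft
      simp only [Nat.sub_zero] at hft
      simp only [decide_eq_false_iff_not, not_lt] at hft
      omega

/-- Invariant maintained during a length swap of a pair of columns. -/
private structure SInv (L n oL : ℕ) (X Y : List ℕ) : Prop where
  hL : oL + X.length = L
  hYL : Y.length + n = L
  hX : X.Chain' (· < ·)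
  hY : Y.Chain' (· < ·)
  hoL : oL ≤ Y.length
  dom : ∀ r, oL ≤ r → r < Y.length → X.getD (r - oL) 0 ≤ Y.getD r 0
  wit : 1 ≤ oL → 1 ≤ n →
    ∃ u, oL ≤ u ∧ 1 ≤ u ∧ u ≤ Y.length ∧ Y.getD (u-1) 0 < X.getD (u - oL) 0

end Proof17b

section Proof17c

private lemma swap_step {L n oL : ℕ} {X Y : List ℕ} (h : SInv L (n+1) oL X Y) :
    ∃ X' Y', revSlide oL X 0 Y = (oL + 1, X', 0, Y') ∧ SInv L n (oL + 1) X' Y' ∧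
      Y'.length = Y.length + 1 ∧
      (∀ r, r < Y.length → Y'.getD r 0 ≤ Y.getD r 0) ∧
      max (X'.getLastD 0) (Y'.getLastD 0) = max (X.getLastD 0) (Y.getLastD 0) := by
  obtain ⟨hL, hYL, hX, hY, hoL, dom, wit⟩ := h
  have hYlt : Y.length < L := by omega
  have hex : ∃ m, m ≤ Y.length ∧ (oL ≤ m ∧ (m = 0 ∨ Y.getD (m-1) 0 < X.getD (m - oL) 0)) := by
    rcases Nat.eq_zero_or_pos oL with h0 | h1
    · exact ⟨0, Nat.zero_le _, by omega, Or.inl rfl⟩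
    · obtain ⟨u, hu1, hu2, hu3, hu4⟩ := wit h1 (by omega)
      exact ⟨u, hu3, hu1, Or.inr hu4⟩
  obtain ⟨m, hm1, hm2⟩ := hex
  obtain ⟨t, hQt, htY, hgreat⟩ :
      ∃ t, (oL ≤ t ∧ (t = 0 ∨ Y.getD (t-1) 0 < X.getD (t - oL) 0)) ∧ t ≤ Y.length ∧
        ∀ s, t < s → s ≤ Y.length →
          ¬(oL ≤ s ∧ (s = 0 ∨ Y.getD (s-1) 0 < X.getD (s - oL) 0)) :=
    ⟨Nat.findGreatest (fun s => oL ≤ s ∧ (s = 0 ∨ Y.getD (s-1) 0 < X.getD (s - oL) 0)) Y.length,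
      Nat.findGreatest_spec
        (P := fun s => oL ≤ s ∧ (s = 0 ∨ Y.getD (s-1) 0 < X.getD (s - oL) 0)) hm1 hm2,
      Nat.findGreatest_le _,
      fun s hs1 hs2 => Nat.findGreatest_is_greatest
        (P := fun s => oL ≤ s ∧ (s = 0 ∨ Y.getD (s-1) 0 < X.getD (s - oL) 0)) hs1 hs2⟩
  have hoLt : oL ≤ t := hQt.1
  have hiX : t - oL < X.length := by omega
  have hmaxQ : ∀ s, t < s → s ≤ Y.length → X.getD (s - oL) 0 ≤ Y.getD (s-1) 0 := by
    intro s h1 h2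
    by_contra hc
    push_neg at hc
    exact hgreat s h1 h2 ⟨by omega, Or.inr hc⟩
  have ht0 : t = 0 ∨ (1 ≤ t ∧ Y.getD (t-1) 0 < X.getD (t - oL) 0) := by
    rcases hQt.2 with h0 | hlt
    · exact Or.inl h0
    · rcases Nat.eq_zero_or_pos t with h0 | h1
      · exact Or.inl h0
      · exact Or.inr ⟨h1, hlt⟩
  have hrev := revSlide_spec htY hoLt hiX ht0
    (fun s hs1 hs2 => ⟨by omega, by omega, hmaxQ s hs1 hs2⟩)
  have hXl : (X.take (t - oL) ++ X.drop (t - oL + 1)).length = X.length - 1 := by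
    simp only [List.length_append, List.length_take, List.length_drop]; omega
  have hYl : (Y.take t ++ [X.getD (t - oL) 0] ++ Y.drop t).length = Y.length + 1 := by
    simp only [List.length_append, List.length_take, List.length_drop,
      List.length_singleton]; omega
  have GX : ∀ a, (X.take (t - oL) ++ X.drop (t - oL + 1)).getD a 0 =
      if a < t - oL then X.getD a 0 else X.getD (a+1) 0 := fun a => getD_delete hiX a
  have GY : ∀ r, (Y.take t ++ [X.getD (t - oL) 0] ++ Y.drop t).getD r 0 =
      if r < t then Y.getD r 0 else if r = t then X.getD (t - oL) 0 else Y.getD (r-1) 0 :=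
    fun r => getD_insert htY _ r
  have hxlt : t < Y.length → X.getD (t - oL) 0 < Y.getD t 0 := by
    intro hc
    have ha := hmaxQ (t+1) (by omega) (by omega)
    have hb : X.getD (t - oL) 0 < X.getD (t + 1 - oL) 0 :=
      chain'_lt_getD hX (by omega) (by omega)
    have he : t + 1 - 1 = t := by omega
    rw [he] at ha
    omega
  refine ⟨X.take (t - oL) ++ X.drop (t - oL + 1),
    Y.take t ++ [X.getD (t - oL) 0] ++ Y.drop t, hrev, ?_, hYl, ?_, ?_⟩
  · -- the invariant for the new state
    refine ⟨by rw [hXl]; omega, by rw [hYl]; omega, ?_, ?_, by rw [hYl]; omega, ?_, ?_⟩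
    · -- new left column strictly increasing
      apply chain'_lt_of_getD
      intro a ha
      rw [hXl] at ha
      rw [GX a, GX (a+1)]
      by_cases h1 : a < t - oL
      · by_cases h2 : a + 1 < t - oL
        · rw [if_pos h1, if_pos h2]
          exact chain'_lt_getD hX (by omega) (by omega)
        · rw [if_pos h1, if_neg h2]
          exact chain'_lt_getD hX (by omega) (by omega)
      · rw [if_neg h1, if_neg (by omega : ¬ a + 1 < t - oL)]
        exact chain'_lt_getD hX (by omega) (by omega)
    · -- new right column strictly increasing
      apply chain'_lt_of_getD
      intro r hr
      rw [hYl] at hr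
      rw [GY r, GY (r+1)]
      rcases lt_trichotomy (r+1) t with hc | hc | hc
      · rw [if_pos (by omega : r < t), if_pos hc]
        exact chain'_lt_getD hY (by omega) (by omega)
      · rw [if_pos (by omega : r < t), if_neg (by omega : ¬ r + 1 < t), if_pos hc]
        rcases ht0 with h0 | ⟨h1, hlt⟩
        · omega
        · have he : r = t - 1 := by omega
          rw [he]
          exact hlt
      · rw [if_neg (by omega : ¬ r + 1 < t), if_neg (by omega : ¬ r + 1 = t)]
        by_cases h2 : r = t
        · rw [if_neg (by omega : ¬ r < t), if_pos h2]
          have he : r + 1 - 1 = t := by omega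
          rw [he]
          exact hxlt (by omega)
        · rw [if_neg (by omega : ¬ r < t), if_neg h2]
          have he : r + 1 - 1 = r := by omega
          rw [he]
          exact chain'_lt_getD hY (by omega) (by omega)
    · -- row domination for the new pair
      intro r h1 h2
      rw [hYl] at h2
      rw [GY r, GX (r - (oL + 1))]
      rcases lt_trichotomy r t with hc | hc | hc
      · rw [if_pos hc, if_pos (by omega : r - (oL+1) < t - oL)]
        have ha : X.getD (r - (oL+1)) 0 < X.getD (r - oL) 0 :=
          chain'_lt_getD hX (by omega) (by omega)
        have hb := dom r (by omega) (by omega)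
        omega
      · rw [if_neg (by omega : ¬ r < t), if_pos hc, if_pos (by omega : r - (oL+1) < t - oL)]
        exact (chain'_lt_getD hX (by omega) (by omega)).le
      · rw [if_neg (by omega : ¬ r < t), if_neg (by omega : ¬ r = t),
          if_neg (by omega : ¬ r - (oL+1) < t - oL)]
        have he : r - (oL + 1) + 1 = r - oL := by omega
        rw [he]
        exact hmaxQ r (by omega) (by omega)
    · -- witness for the next slide
      intro _ hn
      refine ⟨t + 1, by omega, by omega, by rw [hYl]; omega, ?_⟩
      have he1 : t + 1 - 1 = t := by omega
      have he2 : t + 1 - (oL + 1) = t - oL := by omega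
      rw [he1, he2, GY t, GX (t - oL)]
      rw [if_neg (by omega : ¬ t < t), if_pos rfl, if_neg (by omega : ¬ t - oL < t - oL)]
      exact chain'_lt_getD hX (by omega) (by omega)
  · -- domination of the new right column by the old one
    intro r hr
    rw [GY r]
    by_cases h1 : r < t
    · rw [if_pos h1]
    · rw [if_neg h1]
      by_cases h2 : r = t
      · rw [if_pos h2, h2]
        exact (hxlt (by omega)).le
      · rw [if_neg h2]
        exact (chain'_lt_getD hY (by omega : r - 1 < r) hr).le
  · -- bottoms
    set xval := X.getD (t - oL) 0 with hxval
    have hYb : (Y.take t ++ [xval] ++ Y.drop t).getLastD 0 =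
        if t < Y.length then Y.getD (Y.length - 1) 0 else xval := by
      rw [getLastD_eq_getD, hYl]
      simp only [Nat.add_sub_cancel]
      rw [GY Y.length]
      by_cases hc : t < Y.length
      · rw [if_pos hc, if_neg (by omega : ¬ Y.length < t), if_neg (by omega : ¬ Y.length = t)]
      · have hte : t = Y.length := by omega
        rw [if_neg hc, if_neg (by omega : ¬ Y.length < t), if_pos hte.symm]
    have hXb : (X.take (t - oL) ++ X.drop (t - oL + 1)).getLastD 0 =
        if t - oL < X.length - 1 then X.getD (X.length - 1) 0
        else if 2 ≤ X.length then X.getD (X.length - 2) 0 else 0 := by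
      rw [getLastD_eq_getD, hXl]
      by_cases hc : t - oL < X.length - 1
      · rw [if_pos hc, GX (X.length - 1 - 1)]
        rw [if_neg (by omega : ¬ X.length - 1 - 1 < t - oL)]
        have he : X.length - 1 - 1 + 1 = X.length - 1 := by omega
        rw [he]
      · rw [if_neg hc]
        by_cases h2 : 2 ≤ X.length
        · rw [if_pos h2, GX (X.length - 1 - 1), if_pos (by omega : X.length - 1 - 1 < t - oL)]
          have he : X.length - 1 - 1 = X.length - 2 := by omega
          rw [he]
        · rw [if_neg h2, getD_of_le' (by rw [hXl]; omega)]
    rw [hYb, hXb, getLastD_eq_getD X, getLastD_eq_getD Y]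
    by_cases hc : t < Y.length
    · have h2 : 2 ≤ X.length := by omega
      have hc2 : t - oL < X.length - 1 := by omega
      rw [if_pos hc, if_pos hc2]
    · have hte : t = Y.length := by omega
      rw [if_neg hc]
      have hbYle : Y.getD (Y.length - 1) 0 ≤ xval := by
        rcases ht0 with h0 | ⟨h1, hlt⟩
        · rw [getD_of_le' (by omega : Y.length ≤ Y.length - 1)]
          exact Nat.zero_le _
        · have he : Y.length - 1 = t - 1 := by omega
          rw [he]
          exact hlt.le
      have hxb : xval ≤ X.getD (X.length - 1) 0 :=
        chain'_le_getD hX (by omega) (by omega)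
      by_cases hc2 : t - oL < X.length - 1
      · rw [if_pos hc2, max_eq_left hxb, max_eq_left (hbYle.trans hxb)]
      · have hxe : xval = X.getD (X.length - 1) 0 := by
          rw [hxval]
          congr 1
          omega
        rw [if_neg hc2, hxe]
        have hX2b : (if 2 ≤ X.length then X.getD (X.length - 2) 0 else 0) ≤
            X.getD (X.length - 1) 0 := by
          by_cases h2 : 2 ≤ X.length
          · rw [if_pos h2]
            exact (chain'_lt_getD hX (by omega) (by omega)).le
          · rw [if_neg h2]
            exact Nat.zero_le _
        rw [max_eq_right hX2b, max_eq_left (hbYle.trans hxb)]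

end Proof17c

section Proof17d

private lemma swap_iter : ∀ (n : ℕ) {L oL : ℕ} {X Y : List ℕ}, SInv L n oL X Y →
    ∃ X' Y', lengthSwapPair n (oL, X, 0, Y) = (oL + n, X', 0, Y') ∧
      SInv L 0 (oL + n) X' Y' ∧
      (∀ r, r < Y.length → Y'.getD r 0 ≤ Y.getD r 0) ∧
      max (X'.getLastD 0) (Y'.getLastD 0) = max (X.getLastD 0) (Y.getLastD 0) := by
  intro n
  induction n with
  | zero =>
    intro L oL X Y h
    exact ⟨X, Y, by simp [lengthSwapPair], by simpa using h,
      fun r _ => le_refl _, rfl⟩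
  | succ m ih =>
    intro L oL X Y h
    obtain ⟨X1, Y1, hrev, h1, hY1len, hd1, hm1⟩ := swap_step h
    obtain ⟨X', Y', hiter, h0, hd2, hm2⟩ := ih h1
    have he : oL + 1 + m = oL + (m + 1) := by omega
    refine ⟨X', Y', ?_, by rwa [he] at h0, ?_, hm2.trans hm1⟩
    · show lengthSwapPair (m + 1) (oL, X, 0, Y) = _
      rw [lengthSwapPair, hrev, hiter, he]
    · intro r hr
      exact le_trans (hd2 r (by omega)) (hd1 r hr)

private lemma swap_final_bot {L oL : ℕ} {X Y : List ℕ} (h : SInv L 0 oL X Y) :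
    X.getLastD 0 ≤ Y.getLastD 0 := by
  obtain ⟨hL, hYL, hX, hY, hoL, dom, _⟩ := h
  rcases Nat.eq_zero_or_pos X.length with h0 | h1
  · rw [getLastD_eq_getD, getD_of_le' (by omega)]
    exact Nat.zero_le _
  · have hd := dom (oL + X.length - 1) (by omega) (by omega)
    rw [getLastD_eq_getD, getLastD_eq_getD]
    have he : oL + X.length - 1 - oL = X.length - 1 := by omega
    rw [he] at hd
    have he2 : Y.length - 1 = oL + X.length - 1 := by omega
    rw [he2]
    exact hd

private lemma mainSwap {X Y : List ℕ} (hX : X.Chain' (· < ·)) (hY : Y.Chain' (· < ·))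
    (hlen : Y.length ≤ X.length) (hdom : ∀ r, r < Y.length → X.getD r 0 ≤ Y.getD r 0) :
    ∃ X' Y', lengthSwapPair (X.length - Y.length) (0, X, 0, Y) =
        (X.length - Y.length, X', 0, Y') ∧
      Y'.length = X.length ∧ Y'.Chain' (· < ·) ∧
      (∀ r, r < Y.length → Y'.getD r 0 ≤ Y.getD r 0) ∧
      Y'.getLastD 0 = max (X.getLastD 0) (Y.getLastD 0) := by
  have hinv : SInv X.length (X.length - Y.length) 0 X Y := by
    refine ⟨by omega, by omega, hX, hY, Nat.zero_le _, ?_, ?_⟩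
    · intro r _ hr
      have : r - 0 = r := by omega
      rw [this]
      exact hdom r hr
    · intro h1 _
      omega
  obtain ⟨X', Y', hiter, h0, hd, hm⟩ := swap_iter (X.length - Y.length) hinv
  rw [Nat.zero_add] at hiter
  refine ⟨X', Y', hiter, by have := h0.hYL; omega, h0.hY, hd, ?_⟩
  have hle := swap_final_bot h0
  rw [← hm, max_eq_right hle]

end Proof17d

section Proof17e

/-- Adjacent-column facts extracted from `IsSSYT`. -/
private lemma ssyt_col_chain {T : Cols} (hT : IsSSYT T) (i : ℕ) :
    (T.getD i []).Chain' (· < ·) := by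
  by_cases h : i < T.length
  · exact hT.2.1 _ (by rw [List.getD_eq_getElem _ _ h]; exact List.getElem_mem h)
  · rw [List.getD_eq_default _ _ (by omega)]
    exact List.isChain_nil

private lemma chain'_getD_adj {α : Type*} {R : α → α → Prop} {l : List α} {d : α}
    (h : l.Chain' R) {i : ℕ} (hi : i + 1 < l.length) : R (l.getD i d) (l.getD (i+1) d) := by
  have := List.isChain_iff_getElem.1 h i (by omega)
  rwa [List.getD_eq_getElem _ _ (by omega), List.getD_eq_getElem _ _ hi]

private lemma ssyt_len_adj {T : Cols} (hT : IsSSYT T) (i : ℕ) :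
    (T.getD (i+1) []).length ≤ (T.getD i []).length := by
  by_cases h : i + 1 < T.length
  · have h1 := hT.1
    rw [shape] at h1
    replace h1 := (List.isChain_map _).1 h1
    exact chain'_getD_adj (d := []) h1 h
  · rw [List.getD_eq_default _ _ (by omega : T.length ≤ i + 1)]
    exact Nat.zero_le _

private lemma ssyt_dom_adj {T : Cols} (hT : IsSSYT T) (i : ℕ) :
    ∀ r, r < (T.getD (i+1) []).length →
      (T.getD i []).getD r 0 ≤ (T.getD (i+1) []).getD r 0 := by
  by_cases h : i + 1 < T.length
  · have := chain'_getD_adj (d := []) hT.2.2 h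
    exact this
  · intro r hr
    rw [List.getD_eq_default _ _ (by omega : T.length ≤ i + 1)] at hr
    simp at hr

private lemma getD_append_len {α : Type*} (W : List α) (a : α) (rest : List α) (d : α) :
    (W ++ a :: rest).getD W.length d = a := by
  rw [List.getD_eq_getElem?_getD, List.getElem?_append_right (le_refl _), Nat.sub_self]
  rfl

private lemma getD_append_len1 {α : Type*} (W : List α) (a b : α) (rest : List α) (d : α) :
    (W ++ a :: b :: rest).getD (W.length + 1) d = b := by
  rw [List.getD_eq_getElem?_getD, List.getElem?_append_right (by omega)]
  have : W.length + 1 - W.length = 1 := by omega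
  rw [this]
  rfl

end Proof17e

section Proof17f

private lemma get?_eq_some_getD {α : Type*} (l : List α) (d : α) {n : ℕ} (h : n < l.length) :
    l[n]? = some (l.getD n d) := by
  rw [List.getD_eq_getElem?_getD, List.getElem?_eq_getElem h]
  rfl

private lemma get?_append_pair1 {α : Type*} {A : List α} (a b : α) (rest : List α)
    {n : ℕ} (h : A.length = n) : (A ++ [a, b] ++ rest)[n + 1]? = some b := by
  rw [List.append_assoc, List.getElem?_append_right (by omega : A.length ≤ n + 1), h]
  have he : n + 1 - n = 1 := by omega
  rw [he]
  rfl

private lemma get?_append_pair2 {α : Type*} {A : List α} (a b : α) (rest : List α)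
    {n k : ℕ} (h : A.length = n) : (A ++ [a, b] ++ rest)[n + 2 + k]? = rest[k]? := by
  rw [List.append_assoc, List.getElem?_append_right (by omega : A.length ≤ n + 2 + k), h]
  have he : n + 2 + k - n = k + 2 := by omega
  rw [he]
  rfl

set_option maxHeartbeats 1000000 in
private lemma swapAtStage {T : Cols} (hT : IsSSYT T) {j : ℕ} (hj1 : 1 ≤ j)
    (hjlt : j < T.length) {Z : List ℕ}
    (h1 : (Tstage T (j-1)).length = T.length)
    (h2 : (Tstage T (j-1))[j-1]? = some ((0:ℕ), Z))
    (h3 : ∀ i, j ≤ i → i < T.length → (Tstage T (j-1))[i]? = some ((0:ℕ), T.getD i []))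
    (h4 : Z.Chain' (· < ·))
    (h5 : (T.getD j []).length ≤ Z.length)
    (h6 : ∀ r, r < (T.getD j []).length → Z.getD r 0 ≤ (T.getD j []).getD r 0) :
    ∃ Y', (Tstage T j).length = T.length ∧
      (Tstage T j)[j]? = some ((0:ℕ), Y') ∧
      (∀ i, j + 1 ≤ i → i < T.length → (Tstage T j)[i]? = some ((0:ℕ), T.getD i [])) ∧
      Y'.Chain' (· < ·) ∧ Y'.length = Z.length ∧
      (∀ r, r < (T.getD j []).length → Y'.getD r 0 ≤ (T.getD j []).getD r 0) ∧
      Y'.getLastD 0 = max (Z.getLastD 0) ((T.getD j []).getLastD 0) := by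
  obtain ⟨X', Y', hpair, hY'len, hY'c, hY'dom, hY'bot⟩ :=
    mainSwap h4 (ssyt_col_chain hT j) h5 h6
  obtain ⟨m, rfl⟩ : ∃ m, j = m + 1 := ⟨j - 1, by omega⟩
  simp only [Nat.add_sub_cancel] at h1 h2 h3
  have hq2 : (Tstage T m)[m+1]? = some ((0:ℕ), T.getD (m+1) []) :=
    h3 (m+1) (le_refl _) hjlt
  have hstage : Tstage T (m+1) = lengthSwapAt (Tstage T m) (m+1) := rfl
  have hmin : min m (Tstage T m).length = m := by rw [h1]; omega
  refine ⟨Y', ?_, ?_, ?_, hY'c, by omega, hY'dom, by rw [hY'bot]⟩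
  · -- length
    rw [hstage]
    unfold lengthSwapAt
    simp only [Nat.add_sub_cancel, h2, hq2, hpair]
    simp only [List.length_append, List.length_map, List.length_take, List.length_drop,
      List.length_cons, List.length_nil, hmin, h1]
    omega
  · -- entry at j
    rw [hstage]
    unfold lengthSwapAt
    simp only [Nat.add_sub_cancel, h2, hq2, hpair]
    refine get?_append_pair1 _ _ _ ?_
    simp only [List.length_map, List.length_take, hmin]
  · -- entries beyond j
    intro i hi hilt
    obtain ⟨k, rfl⟩ : ∃ k, i = m + 2 + k := ⟨i - (m+2), by omega⟩
    rw [hstage]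
    unfold lengthSwapAt
    simp only [Nat.add_sub_cancel, h2, hq2, hpair]
    rw [get?_append_pair2 _ _ _ (by simp only [List.length_map, List.length_take, hmin] : _ = m),
      List.getElem?_drop]
    have he2 : m + 1 + 1 + k = m + 2 + k := by omega
    rw [he2]
    exact h3 (m + 2 + k) (by omega) hilt

private lemma stageP (T : Cols) (hT : IsSSYT T) :
    ∀ j, 1 ≤ j → j ≤ T.length →
    ∃ Z, (Tstage T (j-1)).length = T.length ∧
      (Tstage T (j-1))[j-1]? = some ((0:ℕ), Z) ∧
      (∀ i, j ≤ i → i < T.length → (Tstage T (j-1))[i]? = some ((0:ℕ), T.getD i [])) ∧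
      Z.Chain' (· < ·) ∧ (T.getD j []).length ≤ Z.length ∧
      (∀ r, r < (T.getD j []).length → Z.getD r 0 ≤ (T.getD j []).getD r 0) := by
  intro j
  induction j with
  | zero => intro h; omega
  | succ m ih =>
    intro _ hlen
    rcases Nat.eq_zero_or_pos m with rfl | hm
    · -- base case j = 1
      refine ⟨T.getD 0 [], by simp [Tstage], ?_, ?_,
        ssyt_col_chain hT 0, ssyt_len_adj hT 0, ssyt_dom_adj hT 0⟩
      · show (T.map _)[0]? = _
        rw [List.getElem?_map, get?_eq_some_getD T [] (by omega : 0 < T.length)]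
        rfl
      · intro i _ hilt
        show (T.map _)[i]? = _
        rw [List.getElem?_map, get?_eq_some_getD T [] hilt]
        rfl
    · -- inductive step
      obtain ⟨Z, h1, h2, h3, h4, h5, h6⟩ := ih (by omega) (by omega)
      obtain ⟨Y', g1, g2, g3, gc, glen, gdom, _⟩ :=
        swapAtStage hT (by omega : 1 ≤ m) (by omega : m < T.length) h1 h2 h3 h4 h5 h6
      refine ⟨Y', ?_, ?_, ?_, gc, ?_, ?_⟩
      · simpa only [Nat.add_sub_cancel] using g1
      · simpa only [Nat.add_sub_cancel] using g2
      · simpa only [Nat.add_sub_cancel] using g3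
      · calc (T.getD (m+1) []).length ≤ (T.getD m []).length := ssyt_len_adj hT m
          _ ≤ Z.length := h5
          _ = Y'.length := glen.symm
      · intro r hr
        have hr' : r < (T.getD m []).length := by
          have := ssyt_len_adj hT m
          omega
        exact le_trans (gdom r hr') (ssyt_dom_adj hT m r hr)

end Proof17f


/-- for 1 ≤ j ≤ k−1, if b_{j+1}^{(j)} ≥ b_j^{(j)} then
b_{j+1}^{(j+1)} = b_{j+1}^{(j)}, and otherwise b_{j+1}^{(j+1)} = b_j^{(j)}. -/
theorem bottom_after_lengthSwap (T : Cols) (hT : IsSSYT T)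
    (j : ℕ) (hj1 : 1 ≤ j) (hjk : j + 1 ≤ T.length) :
    (bstage T j j ≤ bstage T j (j+1) → bstage T (j+1) (j+1) = bstage T j (j+1)) ∧
    (bstage T j (j+1) < bstage T j j → bstage T (j+1) (j+1) = bstage T j j) := by
  obtain ⟨Z, h1, h2, h3, h4, h5, h6⟩ := stageP T hT j hj1 (by omega)
  obtain ⟨Y', g1, g2, g3, gc, glen, gdom, gbot⟩ :=
    swapAtStage hT hj1 (by omega : j < T.length) h1 h2 h3 h4 h5 h6
  have e1 : bstage T j j = Z.getLastD 0 := by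
    unfold bstage
    rw [List.getD_eq_getElem?_getD, h2]
    rfl
  have e2 : bstage T j (j+1) = (T.getD j []).getLastD 0 := by
    unfold bstage
    have he : j + 1 - 1 = j := by omega
    rw [he, List.getD_eq_getElem?_getD, h3 j (le_refl _) (by omega)]
    rfl
  have e3 : bstage T (j+1) (j+1) = Y'.getLastD 0 := by
    unfold bstage
    have he : j + 1 - 1 = j := by omega
    rw [he, List.getD_eq_getElem?_getD, g2]
    rfl
  constructor
  · intro h
    rw [e1, e2] at h
    rw [e3, gbot, e2]
    exact max_eq_right h
  · intro h
    rw [e1, e2] at h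
    rw [e3, gbot, e1]
    exact max_eq_left h.le

end Demazure
end
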